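/- arXiv:2511.10827 — 6 statements merged into one kernel-verified Lean document; each statement's English description precedes it below -/
import Mathlib

section
/- Let m ≥ 1 and K ≥ 2 be natural numbers and let B = 2m−1. Then the probability distribution y on ℕ defined by y(0) = (m(K−2)+1)/(Km), y(i) = 1/(Km) for every i ∈ {1,2,…,2m−1}, and y(i) = 0 for every i ≥ 2m, is (B,K)-feasible. -/
open scoped BigOperators

/-- A probability distribution on ℕ. -/
def IsPMF (p : ℕ → ℝ) : Prop := (∀ i, 0 ≤ p i) ∧ (∑' i, p i) = 1

/-- Point mass distribution at `n`. -/
noncomputable def delta (n : ℕ) : ℕ → ℝ := fun i => if i = n then 1 else 0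

/-- Uniform distribution on the `m` odd numbers `1,3,…,2m-1`. -/
noncomputable def uo (m : ℕ) : ℕ → ℝ := fun i => if Odd i ∧ i < 2*m then (1:ℝ)/m else 0

/-- Uniform distribution on the `m+1` even numbers `0,2,…,2m`. -/
noncomputable def ue (m : ℕ) : ℕ → ℝ := fun i => if Even i ∧ i ≤ 2*m then (1:ℝ)/(m+1) else 0

/-- `(C,K)`-feasibility of a probability distribution `p` on ℕ: there is a probability
mass function `ξ` on the `K`-partitions of `C` such that for each `i`,
`∑_x ξ x * |{k : x k = i}| = K * p i`. -/
def Feasible (C K : ℕ) (p : ℕ → ℝ) : Prop :=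
  ∃ ξ : (Fin K → ℕ) → ℝ,
    (∀ x, 0 ≤ ξ x) ∧
    (∀ x, (∑ k, x k) ≠ C → ξ x = 0) ∧
    (∑' x, ξ x) = 1 ∧
    (∀ i : ℕ, (∑' x : Fin K → ℕ,
        ξ x * ((Finset.univ.filter (fun k => x k = i)).card : ℝ)) = K * p i)

def part4 (m K : ℕ) (hK : 2 ≤ K) (j : ℕ) : Fin K → ℕ :=
  fun k => if k = (⟨0, by omega⟩ : Fin K) then j
    else if k = (⟨1, by omega⟩ : Fin K) then 2*m-1-j else 0

lemma key4 (m K : ℕ) (hK : 2 ≤ K) (f : ℕ → ℕ) (j : ℕ) :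
    ∑ k : Fin K, f (part4 m K hK j k) = f j + f (2*m-1-j) + (K-2) * f 0 := by
  set k0 : Fin K := ⟨0, by omega⟩ with hk0
  set k1 : Fin K := ⟨1, by omega⟩ with hk1
  have hne : k0 ≠ k1 := by simp [hk0, hk1, Fin.ext_iff]
  have hsub : ({k0, k1} : Finset (Fin K)) ⊆ Finset.univ := Finset.subset_univ _
  rw [← Finset.sum_sdiff hsub, Finset.sum_pair hne]
  have h1 : ∀ k ∈ Finset.univ \ ({k0,k1} : Finset (Fin K)), f (part4 m K hK j k) = f 0 := by
    intro k hk
    simp only [Finset.mem_sdiff, Finset.mem_insert, Finset.mem_singleton, not_or] at hk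
    simp only [part4]
    rw [if_neg (hk.2.1 : ¬ k = ⟨0, by omega⟩), if_neg (hk.2.2 : ¬ k = ⟨1, by omega⟩)]
  rw [Finset.sum_congr rfl h1, Finset.sum_const, smul_eq_mul]
  have hcard : (Finset.univ \ ({k0,k1} : Finset (Fin K))).card = K - 2 := by
    rw [Finset.card_sdiff_of_subset hsub, Finset.card_pair hne]
    simp
  have e0 : part4 m K hK j k0 = j := by simp [part4, hk0]
  have e1 : part4 m K hK j k1 = 2*m-1-j := by simp [part4, hk0, hk1, hne.symm, Fin.ext_iff]
  rw [hcard, e0, e1]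
  ring

/-- For m ≥ 1, K ≥ 2 and B = 2m−1, the distribution with
y(0) = (m(K−2)+1)/(Km), y(i) = 1/(Km) for 1 ≤ i ≤ 2m−1, and y(i) = 0 for i ≥ 2m,
is (B,K)-feasible. -/
theorem stmt4 (m K : ℕ) (hm : 1 ≤ m) (hK : 2 ≤ K) :
    Feasible (2*m - 1) K (fun i =>
      if i = 0 then ((m:ℝ)*((K:ℝ)-2)+1)/((K:ℝ)*(m:ℝ))
      else if i < 2*m then 1/((K:ℝ)*(m:ℝ))
      else 0) := by
  classical
  set P := part4 m K hK with hP
  set S : Finset (Fin K → ℕ) := (Finset.range m).image P with hS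
  have hinj : ∀ j ∈ Finset.range m, ∀ j' ∈ Finset.range m, P j = P j' → j = j' := by
    intro j _ j' _ h
    have := congrFun h (⟨0, by omega⟩ : Fin K)
    simpa [hP, part4] using this
  have hm0 : (m:ℝ) ≠ 0 := by positivity
  have hK0 : (K:ℝ) ≠ 0 := by positivity
  refine ⟨fun x => if x ∈ S then (1:ℝ)/m else 0, ?_, ?_, ?_, ?_⟩
  · intro x
    dsimp only
    split
    · positivity
    · exact le_rfl
  · intro x hx
    dsimp only
    rw [if_neg]
    intro hxS
    obtain ⟨j, hj, rfl⟩ := Finset.mem_image.mp hxS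
    apply hx
    have hj' := Finset.mem_range.mp hj
    have := key4 m K hK id j
    simp only [id] at this
    rw [hP] at *
    rw [this]
    omega
  · dsimp only
    rw [tsum_eq_sum (s := S) (fun x hx => if_neg hx),
      Finset.sum_congr rfl (fun x hx => if_pos hx), Finset.sum_const]
    rw [hS, Finset.card_image_of_injOn hinj, Finset.card_range]
    rw [nsmul_eq_mul]
    field_simp
  · intro i
    dsimp only
    rw [tsum_eq_sum (s := S) (fun x hx => by rw [if_neg hx, zero_mul]),
      Finset.sum_congr rfl (fun x hx => by rw [if_pos hx])]
    rw [hS, Finset.sum_image hinj]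
    have hcount : ∀ j, ((Finset.univ.filter (fun k => P j k = i)).card : ℕ) =
        (if j = i then 1 else 0) + (if 2*m-1-j = i then 1 else 0)
          + (K-2)*(if 0 = i then 1 else 0) := by
      intro j
      rw [Finset.card_filter]
      exact key4 m K hK (fun n => if n = i then 1 else 0) j
    calc ∑ j ∈ Finset.range m, (1:ℝ)/m * ((Finset.univ.filter (fun k => P j k = i)).card : ℝ)
        = (1:ℝ)/m * ((∑ j ∈ Finset.range m,
            ((if j = i then 1 else 0) + (if 2*m-1-j = i then 1 else 0)
              + (K-2)*(if 0 = i then 1 else 0)) : ℕ) : ℝ) := by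
          rw [← Finset.mul_sum, Nat.cast_sum]
          congr 1
          exact Finset.sum_congr rfl (fun j _ => by rw [hcount j])
      _ = _ := by
          rw [Finset.sum_add_distrib, Finset.sum_add_distrib]
          by_cases hi0 : i = 0
          · subst hi0
            have hA : ∑ j ∈ Finset.range m, (if j = 0 then 1 else 0) = 1 := by
              rw [Finset.sum_ite_eq' (Finset.range m) 0 (fun _ => 1)]
              rw [if_pos (Finset.mem_range.mpr (by omega))]
            have hB : ∑ j ∈ Finset.range m, (if 2*m-1-j = 0 then 1 else 0) = 0 := by
              apply Finset.sum_eq_zero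
              intro j hj
              have := Finset.mem_range.mp hj
              rw [if_neg (by omega)]
            have hC : ∑ j ∈ Finset.range m, (K-2)*(if 0 = 0 then 1 else 0) = m*(K-2) := by
              simp [mul_comm]
            rw [hA, hB, hC]
            simp only [if_pos rfl]
            push_cast [Nat.cast_sub (by omega : 2 ≤ K)]
            field_simp
            ring
          · have hC : ∑ j ∈ Finset.range m, (K-2)*(if 0 = i then 1 else 0) = 0 := by
              simp [Ne.symm hi0]
            by_cases hi2 : i < 2*m
            · have hAB : (∑ j ∈ Finset.range m, (if j = i then 1 else 0))
                  + ∑ j ∈ Finset.range m, (if 2*m-1-j = i then 1 else 0) = 1 := by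
                by_cases him : i < m
                · have hA : ∑ j ∈ Finset.range m, (if j = i then 1 else 0) = 1 := by
                    rw [Finset.sum_ite_eq' (Finset.range m) i (fun _ => 1)]
                    simp [him]
                  have hB : ∑ j ∈ Finset.range m, (if 2*m-1-j = i then 1 else 0) = 0 := by
                    apply Finset.sum_eq_zero
                    intro j hj
                    have := Finset.mem_range.mp hj
                    rw [if_neg (by omega)]
                  omega
                · have hA : ∑ j ∈ Finset.range m, (if j = i then 1 else 0) = 0 := by
                    apply Finset.sum_eq_zero
                    intro j hj
                    have := Finset.mem_range.mp hj
                    rw [if_neg (by omega)]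
                  have hB : ∑ j ∈ Finset.range m, (if 2*m-1-j = i then 1 else 0) = 1 := by
                    have : ∀ j ∈ Finset.range m,
                        (if 2*m-1-j = i then 1 else 0) = (if j = 2*m-1-i then 1 else 0) := by
                      intro j hj
                      have := Finset.mem_range.mp hj
                      split_ifs <;> omega
                    rw [Finset.sum_congr rfl this,
                      Finset.sum_ite_eq' (Finset.range m) (2*m-1-i) (fun _ => 1)]
                    rw [if_pos (Finset.mem_range.mpr (by omega))]
                  omega
              rw [hC, hAB]
              simp only [hi0, if_neg, hi2, if_pos]
              push_cast
              field_simp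
            · have hA : ∑ j ∈ Finset.range m, (if j = i then 1 else 0) = 0 := by
                apply Finset.sum_eq_zero
                intro j hj
                have := Finset.mem_range.mp hj
                rw [if_neg (by omega)]
              have hB : ∑ j ∈ Finset.range m, (if 2*m-1-j = i then 1 else 0) = 0 := by
                apply Finset.sum_eq_zero
                intro j hj
                have := Finset.mem_range.mp hj
                rw [if_neg (by omega)]
              rw [hA, hB, hC]
              simp [hi0, hi2]
end

section
/- Let m ≥ 1 be an integer and let α, b, c be reals with 0 < α < 1/2, 0 < b ≤ m, and 0 < c ≤ b/(m+1). Set v = 1 − (1−α)b/m − αb/(m+1) + αc/(m(m+1)). Then: (i) for every probability distribution q on ℕ with mean b and Σ_{i≥0} q(2i+1) ≥ c, one has H(x^{m,α}, q) ≥ v; and (ii) the probability distribution y = (1 − b/m)·δ_0 + c·u^o_m + (b/m − c)·u^e_m has mean b and satisfies Σ_{i≥0} y(2i+1) = c, and for every probability distribution p on ℕ with mean m+α, one has H(p, y) ≤ v. In particular, v is the value of the constrained General Lotto game in which player A chooses a distribution on ℕ with mean m+α and player B chooses a distribution on ℕ with mean b whose total mass on odd numbers is at least c. -/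
open scoped BigOperators

/-- `p` has (finite) mean `b`. -/
def HasMean (p : ℕ → ℝ) (b : ℝ) : Prop :=
  Summable (fun i : ℕ => (i:ℝ) * p i) ∧ (∑' i : ℕ, (i:ℝ) * p i) = b

/-- The General Lotto payoff
`H(p,q) = Σ_{(i,j): i>j} p i · q j − Σ_{(i,j): i<j} p i · q j`. -/
noncomputable def Hpay (p q : ℕ → ℝ) : ℝ :=
  (∑' ij : ℕ × ℕ, if ij.2 < ij.1 then p ij.1 * q ij.2 else 0)
  - (∑' ij : ℕ × ℕ, if ij.1 < ij.2 then p ij.1 * q ij.2 else 0)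

/-- The distribution x^{m,α}: x(2i−1) = (m+1−2iα)/(m(m+1)), x(2i) = 2iα/(m(m+1))
for i = 1,…,m, and 0 elsewhere. -/
noncomputable def xma (m : ℕ) (α : ℝ) : ℕ → ℝ := fun j =>
  if j = 0 then 0
  else if j ≤ 2*m then
    (if j % 2 = 1 then ((m:ℝ) + 1 - ((j:ℝ)+1)*α) / ((m:ℝ)*((m:ℝ)+1))
     else (j:ℝ)*α / ((m:ℝ)*((m:ℝ)+1)))
  else 0


section Aux

lemma sum_ite_lt' (x : ℕ → ℝ) (N j : ℕ) :
    ∑ i ∈ Finset.range N, (if i < j then x i else 0)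
      = ∑ i ∈ Finset.range (min j N), x i := by
  rw [← Finset.sum_filter]
  apply Finset.sum_congr _ (fun _ _ => rfl)
  ext i; simp [Finset.mem_filter]; omega

lemma sum_ite_gt' (x : ℕ → ℝ) (N j : ℕ) :
    ∑ i ∈ Finset.range N, (if j < i then x i else 0)
      = (∑ i ∈ Finset.range N, x i) - ∑ i ∈ Finset.range (min (j+1) N), x i := by
  have h := Finset.sum_filter_add_sum_filter_not (Finset.range N) (fun i => j < i) x
  have h1 : (Finset.range N).filter (fun i => ¬ j < i) = Finset.range (min (j+1) N) := by
    ext i; simp [Finset.mem_filter]; omega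
  rw [← Finset.sum_filter, ← h, h1]; ring

lemma IsPMF.summable' {q : ℕ → ℝ} (hq : IsPMF q) : Summable q := by
  by_contra h
  have := hq.2
  rw [tsum_eq_zero_of_not_summable h] at this
  norm_num at this

lemma Hpay_swap (p q : ℕ → ℝ) : Hpay p q = - Hpay q p := by
  unfold Hpay
  have h1 : (∑' ij : ℕ × ℕ, if ij.2 < ij.1 then p ij.1 * q ij.2 else 0)
      = ∑' ij : ℕ × ℕ, if ij.1 < ij.2 then q ij.1 * p ij.2 else 0 := by
    rw [← (Equiv.prodComm ℕ ℕ).tsum_eq (fun ij : ℕ × ℕ => if ij.1 < ij.2 then q ij.1 * p ij.2 else 0)]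
    apply tsum_congr; rintro ⟨i, j⟩
    simp only [Equiv.prodComm_apply, Prod.swap]
    split_ifs <;> simp_all [mul_comm]
  have h2 : (∑' ij : ℕ × ℕ, if ij.1 < ij.2 then p ij.1 * q ij.2 else 0)
      = ∑' ij : ℕ × ℕ, if ij.2 < ij.1 then q ij.1 * p ij.2 else 0 := by
    rw [← (Equiv.prodComm ℕ ℕ).tsum_eq (fun ij : ℕ × ℕ => if ij.2 < ij.1 then q ij.1 * p ij.2 else 0)]
    apply tsum_congr; rintro ⟨i, j⟩
    simp only [Equiv.prodComm_apply, Prod.swap]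
    split_ifs <;> simp_all [mul_comm]
  rw [h1, h2]; ring

lemma Hpay_right (p y : ℕ → ℝ) (N : ℕ) (hp : Summable p) (hpn : ∀ i, 0 ≤ p i)
    (hyn : ∀ j, 0 ≤ y j) (hyN : ∀ j, N ≤ j → y j = 0) :
    Hpay p y = ∑' i, p i *
      ((∑ j ∈ Finset.range N, if j < i then y j else 0)
        - (∑ j ∈ Finset.range N, if i < j then y j else 0)) := by
  have hy : Summable y := by
    apply summable_of_ne_finset_zero (s := Finset.range N)
    intro j hj; exact hyN j (by simpa using hj)
  have hprod : Summable (fun ij : ℕ × ℕ => p ij.1 * y ij.2) :=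
    hp.mul_of_nonneg hy hpn hyn
  have key : ∀ P : ℕ → ℕ → Prop, ∀ _ : DecidableRel P,
      (∑' ij : ℕ × ℕ, if P ij.1 ij.2 then p ij.1 * y ij.2 else 0)
        = ∑' i, p i * (∑ j ∈ Finset.range N, if P i j then y j else 0) := by
    intro P hd
    have hF : Summable (fun ij : ℕ × ℕ => if P ij.1 ij.2 then p ij.1 * y ij.2 else 0) := by
      apply Summable.of_nonneg_of_le _ _ hprod
      · intro ij; split
        · exact mul_nonneg (hpn _) (hyn _)
        · exact le_refl 0
      · intro ij; split
        · exact le_refl _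
        · exact mul_nonneg (hpn _) (hyn _)
    rw [Summable.tsum_prod' hF (fun i => by
      apply summable_of_ne_finset_zero (s := Finset.range N)
      intro j hj
      have : y j = 0 := hyN j (by simpa using hj)
      simp [this])]
    apply tsum_congr
    intro i
    rw [tsum_eq_sum (s := Finset.range N) (fun j hj => by
      have : y j = 0 := hyN j (by simpa using hj)
      simp [this])]
    rw [Finset.mul_sum]
    apply Finset.sum_congr rfl
    intro j _; split <;> ring
  have hA := key (fun i j => j < i) (by infer_instance)
  have hB := key (fun i j => i < j) (by infer_instance)
  unfold Hpay
  rw [hA, hB, ← Summable.tsum_sub]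
  · apply tsum_congr; intro i; ring
  all_goals {
    apply Summable.of_nonneg_of_le _ _ (hp.mul_right (∑ j ∈ Finset.range N, y j))
    · intro i; exact mul_nonneg (hpn i) (Finset.sum_nonneg fun j _ => by split; exacts [hyn j, le_refl 0])
    · intro i
      apply mul_le_mul_of_nonneg_left _ (hpn i)
      apply Finset.sum_le_sum
      intro j _; split; exacts [le_refl _, hyn j] }

end Aux

lemma xma_odd (m : ℕ) (α : ℝ) (k : ℕ) (hk : k + 1 ≤ m) :
    xma m α (2*k+1) = ((m:ℝ) + 1 - (2*(k:ℝ)+2)*α) / ((m:ℝ)*((m:ℝ)+1)) := by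
  have h0 : ¬ (2*k+1 = 0) := by omega
  have h1 : 2*k+1 ≤ 2*m := by omega
  have h2 : (2*k+1) % 2 = 1 := by omega
  simp only [xma, h0, if_false, h1, if_true, h2, if_pos]
  push_cast; ring_nf

lemma xma_even (m : ℕ) (α : ℝ) (k : ℕ) (hk : k + 1 ≤ m) :
    xma m α (2*k+2) = (2*(k:ℝ)+2)*α / ((m:ℝ)*((m:ℝ)+1)) := by
  have h0 : ¬ (2*k+2 = 0) := by omega
  have h1 : 2*k+2 ≤ 2*m := by omega
  have h2 : ¬ ((2*k+2) % 2 = 1) := by omega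
  simp only [xma, h0, if_false, h1, if_true, h2]
  push_cast; ring_nf

lemma xma_big (m : ℕ) (α : ℝ) (j : ℕ) (hj : 2*m+1 ≤ j) : xma m α j = 0 := by
  have h0 : ¬ (j = 0) := by omega
  have h1 : ¬ (j ≤ 2*m) := by omega
  simp only [xma, h0, if_false, h1]

lemma xma_nonneg (m : ℕ) (α : ℝ) (hm : 1 ≤ m) (hα0 : 0 ≤ α) (hα1 : α ≤ 1/2) (j : ℕ) :
    0 ≤ xma m α j := by
  have hM : (1:ℝ) ≤ (m:ℝ) := by exact_mod_cast hm
  unfold xma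
  split
  · rfl
  split
  · rename_i h0 h1
    have hj : (j:ℝ) ≤ 2*(m:ℝ) := by exact_mod_cast h1
    split
    · apply div_nonneg _ (by positivity)
      nlinarith
    · positivity
  · rfl

lemma Sx_formula (m : ℕ) (α : ℝ) (hm : 1 ≤ m) : ∀ k, k ≤ m →
    (∑ i ∈ Finset.range (2*k), xma m α i) = (k:ℝ)*((m:ℝ)+1-2*α)/((m:ℝ)*((m:ℝ)+1)) ∧
    (∑ i ∈ Finset.range (2*k+1), xma m α i) = (k:ℝ)/(m:ℝ) := by
  have hM0 : (0:ℝ) < (m:ℝ) := by exact_mod_cast hm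
  have hM1 : (0:ℝ) < (m:ℝ)+1 := by linarith
  intro k
  induction k with
  | zero =>
    intro _
    constructor
    · simp
    · simp [xma]
  | succ k ih =>
    intro hk
    obtain ⟨ih1, ih2⟩ := ih (by omega)
    have e1 : 2*(k+1) = (2*k+1) + 1 := by ring
    have e2 : 2*(k+1)+1 = (2*k+2) + 1 := by ring
    have hx1 := xma_odd m α k hk
    have hx2 := xma_even m α k hk
    constructor
    · rw [e1, Finset.sum_range_succ, ih2, hx1]
      push_cast
      field_simp
      ring
    · have e3 : 2*k+2 = (2*k+1) + 1 := by ring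
      rw [e2, Finset.sum_range_succ, e3, Finset.sum_range_succ, ih2, hx1, hx2]
      push_cast
      field_simp
      ring

lemma fx_ge (m : ℕ) (α : ℝ) (hm : 1 ≤ m) (hα0 : 0 < α) (hα1 : α < 1/2) (j : ℕ) :
    1 - ((1-α)/(m:ℝ) + α/((m:ℝ)+1)) * j + (if j % 2 = 1 then α/((m:ℝ)*((m:ℝ)+1)) else 0)
      ≤ ((∑ i ∈ Finset.range (2*m+1), xma m α i)
          - ∑ i ∈ Finset.range (min (j+1) (2*m+1)), xma m α i)
        - ∑ i ∈ Finset.range (min j (2*m+1)), xma m α i := by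
  have hM0 : (0:ℝ) < (m:ℝ) := by exact_mod_cast hm
  have hM1 : (0:ℝ) < (m:ℝ)+1 := by linarith
  have htot : (∑ i ∈ Finset.range (2*m+1), xma m α i) = 1 := by
    rw [(Sx_formula m α hm m le_rfl).2]
    field_simp
  by_cases hj : j ≤ 2*m
  · rcases Nat.even_or_odd j with ⟨k, hk⟩ | ⟨k, hk⟩
    · have hkm : k ≤ m := by omega
      have e1 : min (j+1) (2*m+1) = 2*k+1 := by omega
      have e2 : min j (2*m+1) = 2*k := by omega
      have hmod : ¬ (j % 2 = 1) := by omega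
      have hjc : (j:ℝ) = 2*(k:ℝ) := by
        have : j = 2*k := by omega
        exact_mod_cast this
      rw [e1, e2, htot, (Sx_formula m α hm k hkm).1, (Sx_formula m α hm k hkm).2,
        if_neg hmod, hjc]
      apply le_of_eq
      field_simp
      ring
    · have hkm : k + 1 ≤ m := by omega
      have e1 : min (j+1) (2*m+1) = 2*(k+1) := by omega
      have e2 : min j (2*m+1) = 2*k+1 := by omega
      have hmod : j % 2 = 1 := by omega
      have hjc : (j:ℝ) = 2*(k:ℝ)+1 := by exact_mod_cast hk
      rw [e1, e2, htot, (Sx_formula m α hm (k+1) hkm).1, (Sx_formula m α hm k (by omega)).2,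
        if_pos hmod, hjc]
      apply le_of_eq
      push_cast
      field_simp
      ring
  · have e1 : min (j+1) (2*m+1) = 2*m+1 := by omega
    have e2 : min j (2*m+1) = 2*m+1 := by omega
    rw [e1, e2, htot]
    have hjc : 2*(m:ℝ)+1 ≤ (j:ℝ) := by
      have : 2*m+1 ≤ j := by omega
      exact_mod_cast this
    have hco : 0 ≤ (1-α)/(m:ℝ) + α/((m:ℝ)+1) := by
      apply add_nonneg <;> apply div_nonneg <;> linarith
    have h1 : ((1-α)/(m:ℝ) + α/((m:ℝ)+1)) * (2*(m:ℝ)+1)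
        ≤ ((1-α)/(m:ℝ) + α/((m:ℝ)+1)) * (j:ℝ) :=
      mul_le_mul_of_nonneg_left hjc hco
    have h2 : (if j % 2 = 1 then α/((m:ℝ)*((m:ℝ)+1)) else 0) ≤ α/((m:ℝ)*((m:ℝ)+1)) := by
      split
      · exact le_refl _
      · positivity
    have key : 1 - ((1-α)/(m:ℝ) + α/((m:ℝ)+1)) * (2*(m:ℝ)+1) + α/((m:ℝ)*((m:ℝ)+1))
        ≤ -1 := by
      have e : 1 - ((1-α)/(m:ℝ) + α/((m:ℝ)+1)) * (2*(m:ℝ)+1) + α/((m:ℝ)*((m:ℝ)+1))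
          = -1 - ((m:ℝ)+1)*(1-2*α)/((m:ℝ)*((m:ℝ)+1)) := by
        field_simp
        ring
      rw [e]
      have : 0 ≤ ((m:ℝ)+1)*(1-2*α)/((m:ℝ)*((m:ℝ)+1)) := by
        apply div_nonneg _ (by positivity)
        nlinarith
      linarith
    linarith

noncomputable def ydist (m : ℕ) (b c : ℝ) : ℕ → ℝ :=
  fun i => (1 - b/(m:ℝ)) * delta 0 i + c * uo m i + (b/(m:ℝ) - c) * ue m i

lemma ydist_zero (m : ℕ) (b c : ℝ) :
    ydist m b c 0 = (1 - b/(m:ℝ)) + (b/(m:ℝ) - c) * (1/((m:ℝ)+1)) := by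
  have h1 : ¬ Odd 0 := by decide
  simp [ydist, delta, uo, ue, h1, (by decide : Even 0)]

lemma ydist_odd (m : ℕ) (b c : ℝ) (k : ℕ) (hk : k + 1 ≤ m) :
    ydist m b c (2*k+1) = c * (1/(m:ℝ)) := by
  have h0 : ¬ (2*k+1 = 0) := by omega
  have h1 : Odd (2*k+1) := ⟨k, by ring⟩
  have h2 : 2*k+1 < 2*m := by omega
  have h3 : ¬ Even (2*k+1) := by simpa using h1
  simp [ydist, delta, uo, ue, h0, h1, h2, h3]

lemma ydist_even (m : ℕ) (b c : ℝ) (k : ℕ) (hk1 : 1 ≤ k) (hk : k ≤ m) :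
    ydist m b c (2*k) = (b/(m:ℝ) - c) * (1/((m:ℝ)+1)) := by
  have h0 : ¬ (2*k = 0) := by omega
  have h1 : Even (2*k) := ⟨k, by ring⟩
  have h2 : 2*k ≤ 2*m := by omega
  have h3 : ¬ Odd (2*k) := by simpa using h1
  simp [ydist, delta, uo, ue, h0, h1, h2, h3]

lemma ydist_big (m : ℕ) (b c : ℝ) (j : ℕ) (hj : 2*m+1 ≤ j) : ydist m b c j = 0 := by
  have h0 : ¬ (j = 0) := by omega
  have h2 : ¬ (j < 2*m) := by omega
  have h3 : ¬ (j ≤ 2*m) := by omega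
  simp [ydist, delta, uo, ue, h0, h2, h3]

lemma ydist_nonneg (m : ℕ) (b c : ℝ) (hm : 1 ≤ m) (hb0 : 0 < b) (hb1 : b ≤ (m:ℝ))
    (hc0 : 0 < c) (hc1 : c ≤ b/((m:ℝ)+1)) (i : ℕ) : 0 ≤ ydist m b c i := by
  have hM0 : (0:ℝ) < (m:ℝ) := by exact_mod_cast hm
  have hM1 : (0:ℝ) < (m:ℝ)+1 := by linarith
  have h1 : 0 ≤ 1 - b/(m:ℝ) := by
    rw [sub_nonneg, div_le_one hM0]; exact hb1
  have h2 : 0 ≤ b/(m:ℝ) - c := by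
    have : c ≤ b/(m:ℝ) := le_trans hc1 (by
      apply div_le_div_of_nonneg_left (le_of_lt hb0) hM0
      · linarith)
    linarith
  unfold ydist
  have hd : 0 ≤ delta 0 i := by unfold delta; split <;> norm_num
  have huo : 0 ≤ uo m i := by unfold uo; split <;> positivity
  have hue : 0 ≤ ue m i := by unfold ue; split <;> positivity
  have := mul_nonneg h1 hd
  have := mul_nonneg (le_of_lt hc0) huo
  have := mul_nonneg h2 hue
  linarith

lemma Sy_odd (m : ℕ) (b c : ℝ) (hm : 1 ≤ m) : ∀ k, k ≤ m →
    ∑ i ∈ Finset.range (2*k+1), ydist m b c i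
      = (1 - b/(m:ℝ)) + (k:ℝ)*c/(m:ℝ) + ((k:ℝ)+1)*(b/(m:ℝ) - c)/((m:ℝ)+1) := by
  have hM0 : (0:ℝ) < (m:ℝ) := by exact_mod_cast hm
  have hM1 : (0:ℝ) < (m:ℝ)+1 := by linarith
  intro k
  induction k with
  | zero =>
    intro _
    simp only [Nat.mul_zero, Nat.zero_add, Finset.sum_range_one, ydist_zero]
    push_cast
    field_simp
    ring
  | succ k ih =>
    intro hk
    have ih2 := ih (by omega)
    have e1 : 2*(k+1)+1 = (2*k+2) + 1 := by ring
    have e2 : 2*k+2 = (2*k+1) + 1 := by ring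
    have h1 := ydist_odd m b c k hk
    have h2 := ydist_even m b c (k+1) (by omega) hk
    have h2' : ydist m b c (2*k+2) = (b/(m:ℝ) - c) * (1/((m:ℝ)+1)) := by
      rw [show 2*k+2 = 2*(k+1) by ring]; exact h2
    rw [e1, Finset.sum_range_succ, e2, Finset.sum_range_succ, ih2, h1, h2']
    push_cast
    field_simp
    ring

lemma Sy_even (m : ℕ) (b c : ℝ) (hm : 1 ≤ m) (k : ℕ) (hk1 : 1 ≤ k) (hk : k ≤ m) :
    ∑ i ∈ Finset.range (2*k), ydist m b c i
      = (1 - b/(m:ℝ)) + (k:ℝ)*c/(m:ℝ) + (k:ℝ)*(b/(m:ℝ) - c)/((m:ℝ)+1) := by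
  have hM0 : (0:ℝ) < (m:ℝ) := by exact_mod_cast hm
  obtain ⟨k', rfl⟩ : ∃ k', k = k' + 1 := ⟨k - 1, by omega⟩
  have e : 2*(k'+1) = (2*k'+1) + 1 := by ring
  rw [e, Finset.sum_range_succ, Sy_odd m b c hm k' (by omega), ydist_odd m b c k' (by omega)]
  push_cast
  field_simp
  ring

lemma Ty_odd (m : ℕ) (b c : ℝ) (hm : 1 ≤ m) : ∀ k, k ≤ m →
    ∑ i ∈ Finset.range (2*k+1), (i:ℝ) * ydist m b c i
      = (k:ℝ)^2*c/(m:ℝ) + (k:ℝ)*((k:ℝ)+1)*(b/(m:ℝ) - c)/((m:ℝ)+1) := by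
  have hM0 : (0:ℝ) < (m:ℝ) := by exact_mod_cast hm
  have hM1 : (0:ℝ) < (m:ℝ)+1 := by linarith
  intro k
  induction k with
  | zero =>
    intro _
    simp
  | succ k ih =>
    intro hk
    have ih2 := ih (by omega)
    have e1 : 2*(k+1)+1 = (2*k+2) + 1 := by ring
    have e2 : 2*k+2 = (2*k+1) + 1 := by ring
    have h1 := ydist_odd m b c k hk
    have h2 : ydist m b c (2*k+2) = (b/(m:ℝ) - c) * (1/((m:ℝ)+1)) := by
      rw [show 2*k+2 = 2*(k+1) by ring]; exact ydist_even m b c (k+1) (by omega) hk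
    rw [e1, Finset.sum_range_succ, e2, Finset.sum_range_succ, ih2, h1, h2]
    push_cast
    field_simp
    ring

lemma hy_le (m : ℕ) (b c : ℝ) (hm : 1 ≤ m) (hb0 : 0 < b) (hb1 : b ≤ (m:ℝ))
    (hc0 : 0 < c) (hc1 : c ≤ b/((m:ℝ)+1)) (i : ℕ) :
    (∑ j ∈ Finset.range (min i (2*m+1)), ydist m b c j)
      - ((∑ j ∈ Finset.range (2*m+1), ydist m b c j)
          - ∑ j ∈ Finset.range (min (i+1) (2*m+1)), ydist m b c j)
      ≤ (1 - 2*b/(m:ℝ) + (b/(m:ℝ) - c)/((m:ℝ)+1)) + ((b+c)/((m:ℝ)*((m:ℝ)+1))) * i := by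
  have hM0 : (0:ℝ) < (m:ℝ) := by exact_mod_cast hm
  have hM1 : (0:ℝ) < (m:ℝ)+1 := by linarith
  have hd : 0 ≤ b/(m:ℝ) - c := by
    have : c ≤ b/(m:ℝ) := le_trans hc1 (by
      apply div_le_div_of_nonneg_left (le_of_lt hb0) hM0; linarith)
    linarith
  have htot : (∑ j ∈ Finset.range (2*m+1), ydist m b c j) = 1 := by
    rw [Sy_odd m b c hm m le_rfl]
    field_simp
    ring
  rw [htot]
  rcases Nat.eq_zero_or_pos i with hi0 | hipos
  · subst hi0
    have e1 : min 0 (2*m+1) = 0 := by omega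
    have e2 : min 1 (2*m+1) = 2*0+1 := by omega
    rw [e1, e2, Sy_odd m b c hm 0 (by omega)]
    simp only [Finset.range_zero, Finset.sum_empty, Nat.cast_zero]
    have hb : b/(m:ℝ) ≤ 1 := by rw [div_le_one hM0]; exact hb1
    ring_nf
    ring_nf at hb
    linarith
  by_cases hj : i ≤ 2*m
  · rcases Nat.even_or_odd i with ⟨k, hk⟩ | ⟨k, hk⟩
    · -- i = 2k, k ≥ 1
      have hik : i = 2*k := by omega
      have hk1 : 1 ≤ k := by omega
      have hkm : k ≤ m := by omega
      have e1 : min i (2*m+1) = 2*k := by omega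
      have e2 : min (i+1) (2*m+1) = 2*k+1 := by omega
      have hic : (i:ℝ) = 2*(k:ℝ) := by
        rw [hik]; push_cast; ring
      rw [e1, e2, Sy_even m b c hm k hk1 hkm, Sy_odd m b c hm k hkm, hic]
      apply le_of_eq
      field_simp
      ring
    · -- i = 2k+1, k+1 ≤ m
      have hik : i = 2*k+1 := by omega
      have hkm : k + 1 ≤ m := by omega
      have e1 : min i (2*m+1) = 2*k+1 := by omega
      have e2 : min (i+1) (2*m+1) = 2*(k+1) := by omega
      have hic : (i:ℝ) = 2*(k:ℝ)+1 := by
        rw [hik]; push_cast; ring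
      rw [e1, e2, Sy_odd m b c hm k (by omega), Sy_even m b c hm (k+1) (by omega) hkm, hic]
      apply le_of_eq
      push_cast
      field_simp
      ring
  · -- i ≥ 2m+1
    have e1 : min i (2*m+1) = 2*m+1 := by omega
    have e2 : min (i+1) (2*m+1) = 2*m+1 := by omega
    rw [e1, e2, htot]
    have hic : 2*(m:ℝ)+1 ≤ (i:ℝ) := by
      have : 2*m+1 ≤ i := by omega
      exact_mod_cast this
    have hs : 0 ≤ (b+c)/((m:ℝ)*((m:ℝ)+1)) := by positivity
    have h1 : ((b+c)/((m:ℝ)*((m:ℝ)+1))) * (2*(m:ℝ)+1)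
        ≤ ((b+c)/((m:ℝ)*((m:ℝ)+1))) * (i:ℝ) := mul_le_mul_of_nonneg_left hic hs
    have key : (1 - 2*b/(m:ℝ) + (b/(m:ℝ) - c)/((m:ℝ)+1))
        + ((b+c)/((m:ℝ)*((m:ℝ)+1))) * (2*(m:ℝ)+1) = 1 + c/(m:ℝ) := by
      field_simp
      ring
    have hc' : 0 ≤ c/(m:ℝ) := by positivity
    linarith

/-- the value and optimal strategies of the constrained General
Lotto game for 0 < α < 1/2. -/
theorem stmt11 (m : ℕ) (hm : 1 ≤ m) (α b c : ℝ)
    (hα0 : 0 < α) (hα1 : α < 1/2) (hb0 : 0 < b) (hb1 : b ≤ (m:ℝ))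
    (hc0 : 0 < c) (hc1 : c ≤ b/((m:ℝ)+1))
    (v : ℝ) (hv : v = 1 - (1-α)*b/(m:ℝ) - α*b/((m:ℝ)+1) + α*c/((m:ℝ)*((m:ℝ)+1))) :
    (∀ q : ℕ → ℝ, IsPMF q → HasMean q b → c ≤ (∑' i : ℕ, q (2*i+1)) →
      v ≤ Hpay (xma m α) q) ∧
    (IsPMF (fun i => (1 - b/(m:ℝ)) * delta 0 i + c * uo m i + (b/(m:ℝ) - c) * ue m i) ∧
     HasMean (fun i => (1 - b/(m:ℝ)) * delta 0 i + c * uo m i + (b/(m:ℝ) - c) * ue m i) b ∧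
     (∑' i : ℕ, ((1 - b/(m:ℝ)) * delta 0 (2*i+1) + c * uo m (2*i+1)
        + (b/(m:ℝ) - c) * ue m (2*i+1))) = c ∧
     (∀ p : ℕ → ℝ, IsPMF p → HasMean p ((m:ℝ)+α) →
        Hpay p (fun i => (1 - b/(m:ℝ)) * delta 0 i + c * uo m i
          + (b/(m:ℝ) - c) * ue m i) ≤ v)) := by
  have hM0 : (0:ℝ) < (m:ℝ) := by exact_mod_cast hm
  have hM1 : (0:ℝ) < (m:ℝ)+1 := by linarith
  have xnn : ∀ j, 0 ≤ xma m α j := xma_nonneg m α hm (le_of_lt hα0) (le_of_lt hα1)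
  have xbig : ∀ j, 2*m+1 ≤ j → xma m α j = 0 := xma_big m α
  have htotx : (∑ i ∈ Finset.range (2*m+1), xma m α i) = 1 := by
    rw [(Sx_formula m α hm m le_rfl).2]; field_simp
  constructor
  · -- part (i): lower bound for the guaranteed payoff of xma
    intro q hq hmean hodd
    have hq1 := hq.1
    have hqs : Summable q := hq.summable'
    have hexp : Hpay (xma m α) q = ∑' i, q i *
        (((∑ j ∈ Finset.range (2*m+1), xma m α j)
            - ∑ j ∈ Finset.range (min (i+1) (2*m+1)), xma m α j)
          - ∑ j ∈ Finset.range (min i (2*m+1)), xma m α j) := by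
      rw [Hpay_swap, Hpay_right q (xma m α) (2*m+1) hqs hq1 xnn xbig, ← tsum_neg]
      apply tsum_congr; intro i
      rw [sum_ite_lt' (xma m α) (2*m+1) i, sum_ite_gt' (xma m α) (2*m+1) i]
      ring
    have hSxmem : ∀ n, 0 ≤ (∑ j ∈ Finset.range (min n (2*m+1)), xma m α j) ∧
        (∑ j ∈ Finset.range (min n (2*m+1)), xma m α j) ≤ 1 := by
      intro n
      constructor
      · exact Finset.sum_nonneg fun j _ => xnn j
      · rw [← htotx]
        apply Finset.sum_le_sum_of_subset_of_nonneg
        · exact Finset.range_subset_range.mpr (min_le_right _ _)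
        · intro j _ _; exact xnn j
    have hfsum : Summable (fun i => q i *
        (((∑ j ∈ Finset.range (2*m+1), xma m α j)
            - ∑ j ∈ Finset.range (min (i+1) (2*m+1)), xma m α j)
          - ∑ j ∈ Finset.range (min i (2*m+1)), xma m α j)) := by
      apply Summable.of_norm_bounded hqs
      intro i
      rw [Real.norm_eq_abs, abs_mul, abs_of_nonneg (hq1 i)]
      apply mul_le_of_le_one_right (hq1 i)
      rw [abs_le, htotx]
      obtain ⟨h1, h2⟩ := hSxmem (i+1)
      obtain ⟨h3, h4⟩ := hSxmem i
      constructor <;> linarith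
    have hitesum : Summable (fun i : ℕ => if i % 2 = 1 then q i else 0) := by
      apply Summable.of_nonneg_of_le _ _ hqs
      · intro i; split; exacts [hq1 i, le_refl 0]
      · intro i; split; exacts [le_refl _, hq1 i]
    have hgrepr : (fun i : ℕ => q i * (1 - ((1-α)/(m:ℝ) + α/((m:ℝ)+1))*(i:ℝ)
          + (if i % 2 = 1 then α/((m:ℝ)*((m:ℝ)+1)) else 0)))
        = fun i : ℕ => (q i - ((1-α)/(m:ℝ) + α/((m:ℝ)+1)) * ((i:ℝ) * q i))
            + (α/((m:ℝ)*((m:ℝ)+1))) * (if i % 2 = 1 then q i else 0) := by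
      funext i; by_cases h : i % 2 = 1 <;> simp [h] <;> ring
    have hgsum : Summable (fun i : ℕ => q i * (1 - ((1-α)/(m:ℝ) + α/((m:ℝ)+1))*(i:ℝ)
          + (if i % 2 = 1 then α/((m:ℝ)*((m:ℝ)+1)) else 0))) := by
      rw [hgrepr]
      exact (hqs.sub (hmean.1.mul_left _)).add (hitesum.mul_left _)
    have hptwise : ∀ i : ℕ, q i * (1 - ((1-α)/(m:ℝ) + α/((m:ℝ)+1))*(i:ℝ)
          + (if i % 2 = 1 then α/((m:ℝ)*((m:ℝ)+1)) else 0)) ≤ q i *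
        (((∑ j ∈ Finset.range (2*m+1), xma m α j)
            - ∑ j ∈ Finset.range (min (i+1) (2*m+1)), xma m α j)
          - ∑ j ∈ Finset.range (min i (2*m+1)), xma m α j) := by
      intro i
      exact mul_le_mul_of_nonneg_left (fx_ge m α hm hα0 hα1 i) (hq1 i)
    have hOq : (∑' i : ℕ, if i % 2 = 1 then q i else 0) = ∑' i : ℕ, q (2*i+1) := by
      have hinj : Function.Injective (fun k : ℕ => 2*k+1) := by
        intro a b hab
        have : 2*a+1 = 2*b+1 := hab
        omega
      have hsupp : Function.support (fun i : ℕ => if i % 2 = 1 then q i else 0)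
          ⊆ Set.range (fun k : ℕ => 2*k+1) := by
        intro j hj
        rw [Function.mem_support] at hj
        by_cases h : j % 2 = 1
        · exact ⟨j/2, by show 2*(j/2)+1 = j; omega⟩
        · simp [h] at hj
      rw [← Function.Injective.tsum_eq hinj hsupp]
      apply tsum_congr
      intro k
      have hmod : (2*k+1) % 2 = 1 := by omega
      simp [hmod]
    have hval : (∑' i : ℕ, q i * (1 - ((1-α)/(m:ℝ) + α/((m:ℝ)+1))*(i:ℝ)
          + (if i % 2 = 1 then α/((m:ℝ)*((m:ℝ)+1)) else 0)))
        = 1 - ((1-α)/(m:ℝ) + α/((m:ℝ)+1))*b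
          + (α/((m:ℝ)*((m:ℝ)+1))) * (∑' i : ℕ, q (2*i+1)) := by
      rw [hgrepr, Summable.tsum_add (hqs.sub (hmean.1.mul_left _)) (hitesum.mul_left _),
        Summable.tsum_sub hqs (hmean.1.mul_left _), tsum_mul_left, tsum_mul_left,
        hq.2, hmean.2, hOq]
    have hgam : 0 ≤ α/((m:ℝ)*((m:ℝ)+1)) := by positivity
    have hveq : v = 1 - ((1-α)/(m:ℝ) + α/((m:ℝ)+1))*b + (α/((m:ℝ)*((m:ℝ)+1)))*c := by
      rw [hv]; field_simp; ring
    have hmain := Summable.tsum_le_tsum hptwise hgsum hfsum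
    rw [hval] at hmain
    rw [hexp]
    have hmon := mul_le_mul_of_nonneg_left hodd hgam
    linarith
  · -- part (ii): the distribution y
    have ynn := ydist_nonneg m b c hm hb0 hb1 hc0 hc1
    have ybig := ydist_big m b c
    have htoty : (∑ j ∈ Finset.range (2*m+1), ydist m b c j) = 1 := by
      rw [Sy_odd m b c hm m le_rfl]; field_simp; ring
    have hysum : Summable (ydist m b c) := by
      apply summable_of_ne_finset_zero (s := Finset.range (2*m+1))
      intro j hj; exact ybig j (by simpa using hj)
    have hy_tsum : (∑' i, ydist m b c i) = 1 := by
      rw [tsum_eq_sum (s := Finset.range (2*m+1)) (fun j hj => ybig j (by simpa using hj))]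
      exact htoty
    have hPMF : IsPMF (ydist m b c) := ⟨ynn, hy_tsum⟩
    have hMeany : HasMean (ydist m b c) b := by
      constructor
      · apply summable_of_ne_finset_zero (s := Finset.range (2*m+1))
        intro j hj
        rw [ybig j (by simpa using hj)]; ring
      · rw [tsum_eq_sum (s := Finset.range (2*m+1))
          (fun j hj => by rw [ybig j (by simpa using hj)]; ring)]
        rw [Ty_odd m b c hm m le_rfl]
        field_simp
        ring
    have hoddy : (∑' i, ydist m b c (2*i+1)) = c := by
      rw [tsum_eq_sum (s := Finset.range m) (fun i hi => by
        apply ybig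
        simp only [Finset.mem_range] at hi
        omega)]
      rw [Finset.sum_congr rfl (fun i hi => ydist_odd m b c i (by
        simp only [Finset.mem_range] at hi
        omega))]
      rw [Finset.sum_const, Finset.card_range, nsmul_eq_mul]
      field_simp
    refine ⟨hPMF, hMeany, hoddy, ?_⟩
    intro p hp hmp
    have hp1 := hp.1
    have hps : Summable p := hp.summable'
    show Hpay p (ydist m b c) ≤ v
    have hexp : Hpay p (ydist m b c) = ∑' i, p i *
        ((∑ j ∈ Finset.range (min i (2*m+1)), ydist m b c j)
          - ((∑ j ∈ Finset.range (2*m+1), ydist m b c j)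
              - ∑ j ∈ Finset.range (min (i+1) (2*m+1)), ydist m b c j)) := by
      rw [Hpay_right p (ydist m b c) (2*m+1) hps hp1 ynn ybig]
      apply tsum_congr; intro i
      rw [sum_ite_lt' (ydist m b c) (2*m+1) i, sum_ite_gt' (ydist m b c) (2*m+1) i]
    have hSymem : ∀ n, 0 ≤ (∑ j ∈ Finset.range (min n (2*m+1)), ydist m b c j) ∧
        (∑ j ∈ Finset.range (min n (2*m+1)), ydist m b c j) ≤ 1 := by
      intro n
      constructor
      · exact Finset.sum_nonneg fun j _ => ynn j
      · rw [← htoty]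
        apply Finset.sum_le_sum_of_subset_of_nonneg
        · exact Finset.range_subset_range.mpr (min_le_right _ _)
        · intro j _ _; exact ynn j
    have hlsum : Summable (fun i => p i *
        ((∑ j ∈ Finset.range (min i (2*m+1)), ydist m b c j)
          - ((∑ j ∈ Finset.range (2*m+1), ydist m b c j)
              - ∑ j ∈ Finset.range (min (i+1) (2*m+1)), ydist m b c j))) := by
      apply Summable.of_norm_bounded hps
      intro i
      rw [Real.norm_eq_abs, abs_mul, abs_of_nonneg (hp1 i)]
      apply mul_le_of_le_one_right (hp1 i)
      rw [abs_le, htoty]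
      obtain ⟨h1, h2⟩ := hSymem (i+1)
      obtain ⟨h3, h4⟩ := hSymem i
      constructor <;> linarith
    have hrrepr : (fun i : ℕ => p i * ((1 - 2*b/(m:ℝ) + (b/(m:ℝ) - c)/((m:ℝ)+1))
          + ((b+c)/((m:ℝ)*((m:ℝ)+1))) * (i:ℝ)))
        = fun i : ℕ => (1 - 2*b/(m:ℝ) + (b/(m:ℝ) - c)/((m:ℝ)+1)) * p i
            + ((b+c)/((m:ℝ)*((m:ℝ)+1))) * ((i:ℝ) * p i) := by
      funext i; ring
    have hrsum : Summable (fun i : ℕ => p i * ((1 - 2*b/(m:ℝ) + (b/(m:ℝ) - c)/((m:ℝ)+1))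
          + ((b+c)/((m:ℝ)*((m:ℝ)+1))) * (i:ℝ))) := by
      rw [hrrepr]
      exact (hps.mul_left _).add (hmp.1.mul_left _)
    have hptwise : ∀ i : ℕ, p i *
        ((∑ j ∈ Finset.range (min i (2*m+1)), ydist m b c j)
          - ((∑ j ∈ Finset.range (2*m+1), ydist m b c j)
              - ∑ j ∈ Finset.range (min (i+1) (2*m+1)), ydist m b c j))
        ≤ p i * ((1 - 2*b/(m:ℝ) + (b/(m:ℝ) - c)/((m:ℝ)+1))
          + ((b+c)/((m:ℝ)*((m:ℝ)+1))) * (i:ℝ)) := by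
      intro i
      exact mul_le_mul_of_nonneg_left (hy_le m b c hm hb0 hb1 hc0 hc1 i) (hp1 i)
    have hval : (∑' i : ℕ, p i * ((1 - 2*b/(m:ℝ) + (b/(m:ℝ) - c)/((m:ℝ)+1))
          + ((b+c)/((m:ℝ)*((m:ℝ)+1))) * (i:ℝ)))
        = (1 - 2*b/(m:ℝ) + (b/(m:ℝ) - c)/((m:ℝ)+1))
          + ((b+c)/((m:ℝ)*((m:ℝ)+1))) * ((m:ℝ)+α) := by
      rw [hrrepr, Summable.tsum_add (hps.mul_left _) (hmp.1.mul_left _),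
        tsum_mul_left, tsum_mul_left, hp.2, hmp.2]
      ring
    have hveq : (1 - 2*b/(m:ℝ) + (b/(m:ℝ) - c)/((m:ℝ)+1))
          + ((b+c)/((m:ℝ)*((m:ℝ)+1))) * ((m:ℝ)+α) = v := by
      rw [hv]; field_simp; ring
    have hmain := Summable.tsum_le_tsum hptwise hlsum hrsum
    rw [hval] at hmain
    rw [hexp]
    linarith
end

section
/- Let K ≥ 2, m ≥ 1 and R be integers with 0 ≤ R < K, and let x = ((K−R)/K)·δ_m + (R/K)·δ_{m+1}. Then for every probability distribution q on ℕ with mean m/K such that q(i) = 0 for all i > m, one has H(x, q) ≥ 1 − (K−R)/K². -/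
open scoped BigOperators

/-- the strategy ((K−R)/K)·δ_m + (R/K)·δ_{m+1} guarantees at least
1 − (K−R)/K² against any distribution with mean m/K supported on {0,…,m}. -/
theorem stmt13 (K m R : ℕ) (hK : 2 ≤ K) (hm : 1 ≤ m) (hR : R < K)
    (q : ℕ → ℝ) (hq : IsPMF q) (hmean : HasMean q ((m:ℝ)/(K:ℝ)))
    (hsupp : ∀ i, m < i → q i = 0) :
    1 - ((K:ℝ)-(R:ℝ))/(K:ℝ)^2
      ≤ Hpay (fun i => (((K:ℝ)-(R:ℝ))/(K:ℝ)) * delta m i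
          + ((R:ℝ)/(K:ℝ)) * delta (m+1) i) q := by
  set k : ℝ := (K:ℝ) with hk
  set r : ℝ := (R:ℝ) with hr
  have hk0 : (0:ℝ) < k := by
    have : (2:ℝ) ≤ (K:ℝ) := by exact_mod_cast hK
    rw [hk]; linarith
  have hrk : r ≤ k := by rw [hr, hk]; exact_mod_cast hR.le
  set p : ℕ → ℝ := fun i => ((k - r)/k) * delta m i + (r/k) * delta (m+1) i with hp
  set S0 : ℝ := ∑ j ∈ Finset.range m, q j with hS0
  -- total sum of q
  have htot : S0 + q m = 1 := by
    have h1 : (∑' i, q i) = ∑ j ∈ Finset.range (m+1), q j := by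
      apply tsum_eq_sum
      intro i hi
      exact hsupp i (by simpa using Nat.lt_of_succ_le (Nat.not_lt.mp (by simpa using hi)))
    rw [hq.2, Finset.sum_range_succ] at h1
    linarith [h1]
  -- mean bound : k * q m ≤ 1
  have hm0 : (0:ℝ) < (m:ℝ) := by exact_mod_cast hm
  have hkq : k * q m ≤ 1 := by
    have h1 : (∑' i : ℕ, (i:ℝ) * q i) = ∑ j ∈ Finset.range (m+1), (j:ℝ) * q j := by
      apply tsum_eq_sum
      intro i hi
      have : q i = 0 := hsupp i (by simpa using Nat.lt_of_succ_le (Nat.not_lt.mp (by simpa using hi)))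
      simp [this]
    have h2 : (m:ℝ) * q m ≤ ∑ j ∈ Finset.range (m+1), (j:ℝ) * q j := by
      apply Finset.single_le_sum (f := fun j : ℕ => (j:ℝ) * q j)
      · intro j _
        exact mul_nonneg (Nat.cast_nonneg j) (hq.1 j)
      · simp
    rw [← h1, hmean.2] at h2
    have h3 : (m:ℝ)/k * k = m := div_mul_cancel₀ _ hk0.ne'
    have h4 : (m:ℝ) * q m * k ≤ (m:ℝ)/k * k := mul_le_mul_of_nonneg_right h2 hk0.le
    rw [h3] at h4
    have h5 : (m:ℝ) * (k * q m) ≤ (m:ℝ) * 1 := by linarith [h4, mul_comm ((m:ℝ) * q m) k]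
    exact le_of_mul_le_mul_left (by nlinarith [h4]) hm0
  have hq0 : 0 ≤ q m := hq.1 m
  -- compute the first tsum
  have hT1 : (∑' ij : ℕ × ℕ, if ij.2 < ij.1 then p ij.1 * q ij.2 else 0)
      = ((k - r)/k) * S0 + (r/k) * (S0 + q m) := by
    have hsum : (∑' ij : ℕ × ℕ, if ij.2 < ij.1 then p ij.1 * q ij.2 else 0)
        = ∑ ij ∈ (Finset.range (m+2)) ×ˢ (Finset.range (m+1)),
            (if ij.2 < ij.1 then p ij.1 * q ij.2 else 0) := by
      apply tsum_eq_sum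
      rintro ⟨i, j⟩ hij
      rw [Finset.mem_product] at hij
      push_neg at hij
      simp only [Finset.mem_range] at hij
      by_cases hi : i < m + 2
      · have hj : ¬ j < m + 1 := hij hi
        have : q j = 0 := hsupp j (by omega)
        simp [this]
      · have : p i = 0 := by
          have h1 : i ≠ m := by omega
          have h2 : i ≠ m + 1 := by omega
          simp [hp, delta, h1, h2]
        simp [this]
    rw [hsum, Finset.sum_product]
    have hinner : ∀ i, (∑ j ∈ Finset.range (m+1), if j < i then p i * q j else 0)
        = p i * (∑ j ∈ Finset.range (m+1), if j < i then q j else 0) := by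
      intro i
      rw [Finset.mul_sum]
      apply Finset.sum_congr rfl
      intro j _
      by_cases h : j < i <;> simp [h]
    have hgm : (∑ j ∈ Finset.range (m+1), if j < m then q j else 0) = S0 := by
      rw [Finset.sum_range_succ]
      have h1 : (∑ j ∈ Finset.range m, if j < m then q j else 0) = S0 :=
        Finset.sum_congr rfl (fun j hj => by simp [Finset.mem_range.mp hj])
      simp [h1]
    have hgm1 : (∑ j ∈ Finset.range (m+1), if j < m + 1 then q j else 0) = S0 + q m := by
      rw [← Finset.sum_range_succ q m]
      exact Finset.sum_congr rfl (fun j hj => by simp [Finset.mem_range.mp hj])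
    set g : ℕ → ℝ := fun i => ∑ j ∈ Finset.range (m+1), if j < i then q j else 0 with hg
    have hterm : ∀ i, (∑ j ∈ Finset.range (m+1), if j < i then p i * q j else 0)
        = (if i = m then ((k - r)/k) * g i else 0) + (if i = m+1 then (r/k) * g i else 0) := by
      intro i
      rw [hinner i]
      by_cases h1 : i = m
      · simp [hp, delta, h1, hg]
      · by_cases h2 : i = m + 1
        · simp [hp, delta, h1, h2, hg]
        · simp [hp, delta, h1, h2]
    rw [Finset.sum_congr rfl (fun i _ => hterm i), Finset.sum_add_distrib,
      Finset.sum_ite_eq' (Finset.range (m+2)) m (fun i => ((k - r)/k) * g i),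
      Finset.sum_ite_eq' (Finset.range (m+2)) (m+1) (fun i => (r/k) * g i)]
    have hmem1 : m ∈ Finset.range (m+2) := Finset.mem_range.mpr (by omega)
    have hmem2 : m + 1 ∈ Finset.range (m+2) := Finset.mem_range.mpr (by omega)
    rw [if_pos hmem1, if_pos hmem2]
    have e1 : g m = S0 := hgm
    have e2 : g (m+1) = S0 + q m := hgm1
    rw [e1, e2]
  -- the second tsum is zero
  have hT2 : (∑' ij : ℕ × ℕ, if ij.1 < ij.2 then p ij.1 * q ij.2 else 0) = 0 := by
    have : ∀ ij : ℕ × ℕ, (if ij.1 < ij.2 then p ij.1 * q ij.2 else 0) = 0 := by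
      rintro ⟨i, j⟩
      by_cases h : i < j
      · simp only [h, if_true]
        by_cases hjm : m < j
        · simp [hsupp j hjm]
        · have hi1 : i ≠ m := by omega
          have hi2 : i ≠ m + 1 := by omega
          simp [hp, delta, hi1, hi2]
      · simp [h]
    rw [tsum_congr this, tsum_zero]
  rw [Hpay, hT1, hT2]
  have hS : S0 = 1 - q m := by linarith
  rw [hS]
  have hk2 : (0:ℝ) < k^2 := by positivity
  have e : (k - r)/k * (1 - q m) + r/k * (1 - q m + q m) - 0 = 1 - ((k - r) * q m)/k := by
    field_simp
    ring
  rw [e]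
  have hfin : ((k - r) * q m)/k ≤ (k - r)/k^2 := by
    rw [div_le_div_iff₀ hk0 hk2]
    nlinarith [mul_le_mul_of_nonneg_left hkq (mul_nonneg (sub_nonneg.mpr hrk) hk0.le)]
  linarith [hfin]
end

section
/- Let m ≥ 1 and K ≥ 2 be natural numbers and let C = mK. Then the distribution u^o_m is (C,K)-feasible if and only if C ≡ K (mod 2). -/
open scoped BigOperators

lemma tsum_mul_family {K : ℕ} {ι : Type*} [DecidableEq ι] (s : Finset ι) (w : ι → ℝ)
    (P : ι → Fin K → ℕ) (f : (Fin K → ℕ) → ℝ) :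
    ∑' x : Fin K → ℕ, (∑ j ∈ s, if P j = x then w j else 0) * f x
      = ∑ j ∈ s, w j * f (P j) := by
  have h1 : ∀ x : Fin K → ℕ, (∑ j ∈ s, if P j = x then w j else 0) * f x
      = ∑ j ∈ s, (if x = P j then w j * f (P j) else 0) := by
    intro x
    rw [Finset.sum_mul]
    refine Finset.sum_congr rfl fun j _ => ?_
    by_cases h : P j = x
    · subst h; simp
    · simp [h, Ne.symm h]
  rw [tsum_congr h1, Summable.tsum_finsetSum (fun j _ => ⟨_, hasSum_ite_eq (P j) _⟩)]
  exact Finset.sum_congr rfl fun j _ => tsum_ite_eq (P j) _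
lemma feasible_family {C K : ℕ} {ι : Type*} [DecidableEq ι] (s : Finset ι) (hs : s.Nonempty)
    (p : ℕ → ℝ) (P : ι → Fin K → ℕ)
    (hsum : ∀ j ∈ s, (∑ k, P j k) = C)
    (hcount : ∀ i : ℕ, (∑ j ∈ s, ((Finset.univ.filter (fun k => P j k = i)).card : ℝ))
        = s.card * (K * p i)) :
    Feasible C K p := by
  have hcard : (0:ℝ) < s.card := by exact_mod_cast Finset.card_pos.mpr hs
  refine ⟨fun x => ∑ j ∈ s, if P j = x then 1 / (s.card:ℝ) else 0, ?_, ?_, ?_, ?_⟩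
  · intro x
    refine Finset.sum_nonneg fun j _ => ?_
    split
    · positivity
    · exact le_rfl
  · intro x hx
    refine Finset.sum_eq_zero fun j hj => ?_
    rw [if_neg]
    intro h
    exact hx (by rw [← h]; exact hsum j hj)
  · have h := tsum_mul_family s (fun _ => 1/(s.card:ℝ)) P (fun _ => 1)
    simp only [mul_one] at h
    beta_reduce
    rw [h, Finset.sum_const, nsmul_eq_mul]
    field_simp
  · intro i
    have h := tsum_mul_family s (fun _ => 1/(s.card:ℝ)) P
      (fun x => ((Finset.univ.filter (fun k => x k = i)).card : ℝ))
    beta_reduce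
    rw [h, ← Finset.mul_sum, hcount i, one_div, inv_mul_cancel_left₀ hcard.ne']
lemma sum_Ico_const {α : Type*} [AddCommMonoid α] (lo hi : ℕ) (f : ℕ → α) (c : α)
    (hf : ∀ k, lo ≤ k → k < hi → f k = c) :
    ∑ k ∈ Finset.Ico lo hi, f k = (hi - lo) • c := by
  rw [Finset.sum_congr rfl (fun k hk => hf k (Finset.mem_Ico.mp hk).1 (Finset.mem_Ico.mp hk).2),
    Finset.sum_const, Nat.card_Ico]

lemma sum_split2 (K h : ℕ) (hh : h ≤ K) (f : ℕ → ℕ) :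
    ∑ k ∈ Finset.range K, f k = ∑ k ∈ Finset.Ico 0 h, f k + ∑ k ∈ Finset.Ico h K, f k := by
  rw [Finset.range_eq_Ico, ← Finset.sum_Ico_consecutive _ (Nat.zero_le h) hh]

def Pe (m K j : ℕ) : Fin K → ℕ := fun k => if (k:ℕ) < K/2 then 2*j+1 else 2*m-1-2*j

lemma Pe_sum (m K j : ℕ) (hK2 : K % 2 = 0) (hj : j < m) : ∑ k, Pe m K j k = m * K := by
  have h1 : K/2 ≤ K := Nat.div_le_self K 2
  simp only [Pe]
  rw [Fin.sum_univ_eq_sum_range (fun k => if k < K/2 then 2*j+1 else 2*m-1-2*j) K,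
    sum_split2 K (K/2) h1]
  rw [sum_Ico_const 0 (K/2) _ (2*j+1) (fun k _ hk => if_pos hk),
    sum_Ico_const (K/2) K _ (2*m-1-2*j) (fun k hk _ => if_neg (by omega)),
    smul_eq_mul, smul_eq_mul]
  have e1 : K - K/2 = K/2 := by omega
  have e2 : (2*j+1) + (2*m-1-2*j) = 2*m := by omega
  have e3 : K = 2 * (K/2) := by omega
  rw [Nat.sub_zero, e1, ← Nat.mul_add, e2]
  calc K/2 * (2*m) = m * (2 * (K/2)) := by ring
    _ = m * K := by rw [← e3]

lemma Pe_count (m K j i : ℕ) :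
    (Finset.univ.filter (fun k => Pe m K j k = i)).card
      = (if 2*j+1 = i then K/2 else 0) + (if 2*m-1-2*j = i then K - K/2 else 0) := by
  have h1 : K/2 ≤ K := Nat.div_le_self K 2
  rw [Finset.card_filter]
  simp only [Pe]
  erw [Fin.sum_univ_eq_sum_range (fun k => if (if k < K/2 then 2*j+1 else 2*m-1-2*j) = i then 1 else 0) K,
    sum_split2 K (K/2) h1]
  rw [sum_Ico_const 0 (K/2) _ (if 2*j+1 = i then 1 else 0) (fun k _ hk => by rw [if_pos (show k < K/2 from hk)]),
    sum_Ico_const (K/2) K _ (if 2*m-1-2*j = i then 1 else 0) (fun k hk _ => by rw [if_neg (show ¬ k < K/2 by omega)]),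
    smul_eq_mul, smul_eq_mul, Nat.sub_zero]
  split <;> split <;> ring
lemma sum_if_unique (m c i : ℕ) (g : ℕ → ℕ)
    (h : ∃ j0, j0 ∈ Finset.range m ∧ g j0 = i ∧ ∀ b ∈ Finset.range m, g b = i → b = j0) :
    ∑ j ∈ Finset.range m, (if g j = i then c else 0) = c := by
  obtain ⟨j0, hmem, hgi, huniq⟩ := h
  rw [Finset.sum_eq_single_of_mem j0 hmem
    (fun b hb hne => if_neg (fun hgb => hne (huniq b hb hgb)))]
  exact if_pos hgi

lemma sum_hit_zero (m c i : ℕ) (g : ℕ → ℕ) (h : ∀ b ∈ Finset.range m, g b ≠ i) :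
    ∑ j ∈ Finset.range m, (if g j = i then c else 0) = 0 :=
  Finset.sum_eq_zero fun j hj => if_neg (h j hj)

lemma sum_ind1 (m i c : ℕ) :
    ∑ j ∈ Finset.range m, (if 2*j+1 = i then c else 0)
      = if (i % 2 = 1 ∧ i < 2*m) then c else 0 := by
  by_cases hi : i % 2 = 1 ∧ i < 2*m
  · rw [if_pos hi]
    refine sum_if_unique m c i _ ⟨i/2, Finset.mem_range.mpr (by omega), by omega, ?_⟩
    intro b hb hgb
    have := Finset.mem_range.mp hb
    omega
  · rw [if_neg hi]
    refine sum_hit_zero m c i _ fun b hb => ?_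
    have := Finset.mem_range.mp hb
    omega

lemma sum_ind2 (m i c : ℕ) (hm : 1 ≤ m) :
    ∑ j ∈ Finset.range m, (if 2*m-1-2*j = i then c else 0)
      = if (i % 2 = 1 ∧ i < 2*m) then c else 0 := by
  by_cases hi : i % 2 = 1 ∧ i < 2*m
  · rw [if_pos hi]
    refine sum_if_unique m c i _ ⟨m-1-i/2, Finset.mem_range.mpr (by omega), by omega, ?_⟩
    intro b hb hgb
    have := Finset.mem_range.mp hb
    omega
  · rw [if_neg hi]
    refine sum_hit_zero m c i _ fun b hb => ?_
    have := Finset.mem_range.mp hb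
    omega

lemma uo_pos_eq (m i : ℕ) (hi : i % 2 = 1 ∧ i < 2*m) : uo m i = 1/m := by
  unfold uo
  rw [if_pos ⟨Nat.odd_iff.mpr hi.1, hi.2⟩]

lemma uo_zero_eq (m i : ℕ) (hi : ¬(i % 2 = 1 ∧ i < 2*m)) : uo m i = 0 := by
  unfold uo
  rw [if_neg]
  rintro ⟨h1, h2⟩
  exact hi ⟨Nat.odd_iff.mp h1, h2⟩

lemma feasible_even (m K : ℕ) (hm : 1 ≤ m) (hK2 : K % 2 = 0) :
    Feasible (m*K) K (uo m) := by
  refine feasible_family (Finset.range m) ⟨0, Finset.mem_range.mpr hm⟩ (uo m) (Pe m K)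
    (fun j hj => Pe_sum m K j hK2 (Finset.mem_range.mp hj)) (fun i => ?_)
  have hN : ∑ j ∈ Finset.range m, (Finset.univ.filter (fun k => Pe m K j k = i)).card
      = if (i % 2 = 1 ∧ i < 2*m) then K else 0 := by
    rw [Finset.sum_congr rfl (fun j _ => Pe_count m K j i), Finset.sum_add_distrib,
      sum_ind1, sum_ind2 m i _ hm]
    split
    · omega
    · omega
  rw [← Nat.cast_sum, hN, Finset.card_range]
  by_cases hi : i % 2 = 1 ∧ i < 2*m
  · rw [if_pos hi, uo_pos_eq m i hi]
    have hm' : (m:ℝ) ≠ 0 := Nat.cast_ne_zero.mpr (by omega)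
    field_simp
  · rw [if_neg hi, uo_zero_eq m i hi]
    simp

lemma necessity (m K : ℕ) (hf : Feasible (m*K) K (uo m)) : (m*K) % 2 = K % 2 := by
  obtain ⟨ξ, hpos, hzero, htot, hcnt⟩ := hf
  have hsumm : Summable ξ := by
    by_contra hs
    rw [tsum_eq_zero_of_not_summable hs] at htot
    norm_num at htot
  obtain ⟨x, hx⟩ : ∃ x, ξ x ≠ 0 := by
    by_contra h
    push_neg at h
    simp only [h, tsum_zero] at htot
    norm_num at htot
  have hxpos : 0 < ξ x := (hpos x).lt_of_ne' hx
  have hxsum : ∑ k, x k = m*K := by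
    by_contra h
    exact hx (hzero x h)
  have hodd : ∀ k : Fin K, x k % 2 = 1 := by
    intro k
    by_contra hk
    set i := x k with hi
    have hu : uo m i = 0 := uo_zero_eq m i (fun h => hk h.1)
    have h0 : ∑' y : Fin K → ℕ,
        ξ y * ((Finset.univ.filter (fun k' => y k' = i)).card : ℝ) = 0 := by
      rw [hcnt i, hu, mul_zero]
    have hsum2 : Summable (fun y : Fin K → ℕ =>
        ξ y * ((Finset.univ.filter (fun k' => y k' = i)).card : ℝ)) := by
      refine Summable.of_nonneg_of_le
        (fun y => mul_nonneg (hpos y) (Nat.cast_nonneg _)) (fun y => ?_)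
        (hsumm.mul_right (K:ℝ))
      have hle : ((Finset.univ.filter (fun k' => y k' = i)).card : ℝ) ≤ K := by
        have := Finset.card_filter_le (Finset.univ : Finset (Fin K)) (fun k' => y k' = i)
        have h2 : (Finset.univ : Finset (Fin K)).card = K := by simp
        exact_mod_cast h2 ▸ this
      exact mul_le_mul_of_nonneg_left hle (hpos y)
    have hle := Summable.le_tsum hsum2 x (fun y _ => mul_nonneg (hpos y) (Nat.cast_nonneg _))
    rw [h0] at hle
    have hcard : 0 < ((Finset.univ.filter (fun k' => x k' = i)).card : ℝ) := by
      have hk' : k ∈ Finset.univ.filter (fun k' => x k' = i) :=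
        Finset.mem_filter.mpr ⟨Finset.mem_univ _, rfl⟩
      exact_mod_cast Finset.card_pos.mpr ⟨k, hk'⟩
    nlinarith [mul_pos hxpos hcard]
  have hpar : (∑ k, x k) % 2 = K % 2 := by
    rw [Finset.sum_nat_mod, Finset.sum_congr rfl (fun k _ => hodd k)]
    simp
  rw [hxsum] at hpar
  exact hpar

def sig (m j : ℕ) : ℕ := if j + m/2 < m then j + m/2 else j + m/2 - m
def tau (m j : ℕ) : ℕ := if j ≤ m/2 then 2*(m/2) - 2*j else 2*m - 1 - 2*j

lemma sig_lt (m j : ℕ) (hj : j < m) : sig m j < m := by unfold sig; split <;> omega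
lemma tau_lt (m j : ℕ) (hm : m % 2 = 1) (hj : j < m) : tau m j < m := by
  unfold tau; split <;> omega

lemma sig_tau_sum (m j : ℕ) (hm : m % 2 = 1) (hj : j < m) :
    (2*j+1) + (2*(sig m j)+1) + (2*(tau m j)+1) = 3*m := by
  unfold sig tau; split <;> split <;> omega

def Po (m K : ℕ) (jl : ℕ × ℕ) : Fin K → ℕ := fun k =>
  if (k:ℕ) < 1 then 2*jl.1+1
  else if (k:ℕ) < 2 then 2*(sig m jl.1)+1
  else if (k:ℕ) < 3 then 2*(tau m jl.1)+1
  else if (k:ℕ) < 3 + (K-3)/2 then 2*jl.2+1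
  else 2*m-1-2*jl.2

lemma Po_sum (m K : ℕ) (jl : ℕ × ℕ) (hm : m % 2 = 1) (hK : 3 ≤ K) (hK2 : K % 2 = 1)
    (hj : jl.1 < m) (hl : jl.2 < m) : ∑ k, Po m K jl k = m * K := by
  set d := (K-3)/2 with hd
  simp only [Po]
  rw [Fin.sum_univ_eq_sum_range (fun k =>
    if k < 1 then 2*jl.1+1
    else if k < 2 then 2*(sig m jl.1)+1
    else if k < 3 then 2*(tau m jl.1)+1
    else if k < 3 + d then 2*jl.2+1
    else 2*m-1-2*jl.2) K]
  rw [Finset.range_eq_Ico,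
    Finset.sum_eq_sum_Ico_succ_bot (by omega : 0 < K),
    Finset.sum_eq_sum_Ico_succ_bot (by omega : 1 < K),
    Finset.sum_eq_sum_Ico_succ_bot (by omega : 2 < K),
    ← Finset.sum_Ico_consecutive _ (by omega : 3 ≤ 3 + d) (by omega : 3 + d ≤ K)]
  rw [sum_Ico_const 3 (3+d) _ (2*jl.2+1)
      (fun k hk1 hk2 => by
        rw [if_neg (show ¬ k < 1 by omega), if_neg (show ¬ k < 2 by omega),
          if_neg (show ¬ k < 3 by omega), if_pos hk2]),
    sum_Ico_const (3+d) K _ (2*m-1-2*jl.2)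
      (fun k hk1 hk2 => by
        rw [if_neg (show ¬ k < 1 by omega), if_neg (show ¬ k < 2 by omega),
          if_neg (show ¬ k < 3 by omega), if_neg (show ¬ k < 3 + d by omega)])]
  norm_num
  have hS3 := sig_tau_sum m jl.1 hm hj
  have hDE : (2*jl.2+1) + (2*m-1-2*jl.2) = 2*m := by omega
  have hKd : K = 2*d + 3 := by omega
  have hKd' : K - (3+d) = d := by omega
  rw [hKd', show m * K = m * (2*d+3) from by rw [← hKd]]
  zify
  zify at hS3 hDE
  linear_combination hS3 + (d:ℤ) * hDE
lemma Po_count (m K : ℕ) (jl : ℕ × ℕ) (i : ℕ) (hK : 3 ≤ K) :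
    (Finset.univ.filter (fun k => Po m K jl k = i)).card
      = ((if 2*jl.1+1 = i then 1 else 0) + (if 2*(sig m jl.1)+1 = i then 1 else 0)
        + (if 2*(tau m jl.1)+1 = i then 1 else 0))
        + ((if 2*jl.2+1 = i then (K-3)/2 else 0)
          + (if 2*m-1-2*jl.2 = i then K-3-(K-3)/2 else 0)) := by
  set d := (K-3)/2 with hd
  rw [Finset.card_filter]
  simp only [Po]
  erw [Fin.sum_univ_eq_sum_range (fun k =>
    if (if k < 1 then 2*jl.1+1
    else if k < 2 then 2*(sig m jl.1)+1
    else if k < 3 then 2*(tau m jl.1)+1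
    else if k < 3 + d then 2*jl.2+1
    else 2*m-1-2*jl.2) = i then 1 else 0) K]
  rw [Finset.range_eq_Ico,
    Finset.sum_eq_sum_Ico_succ_bot (by omega : 0 < K),
    Finset.sum_eq_sum_Ico_succ_bot (by omega : 1 < K),
    Finset.sum_eq_sum_Ico_succ_bot (by omega : 2 < K),
    ← Finset.sum_Ico_consecutive _ (by omega : 3 ≤ 3 + d) (by omega : 3 + d ≤ K)]
  rw [sum_Ico_const 3 (3+d) _ (if 2*jl.2+1 = i then 1 else 0)
      (fun k hk1 hk2 => by
        rw [if_neg (show ¬ k < 1 by omega), if_neg (show ¬ k < 2 by omega),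
          if_neg (show ¬ k < 3 by omega), if_pos (show k < 3 + d from hk2)]),
    sum_Ico_const (3+d) K _ (if 2*m-1-2*jl.2 = i then 1 else 0)
      (fun k hk1 hk2 => by
        rw [if_neg (show ¬ k < 1 by omega), if_neg (show ¬ k < 2 by omega),
          if_neg (show ¬ k < 3 by omega), if_neg (show ¬ k < 3 + d by omega)])]
  norm_num
  rw [show K-(3+d) = K-3-d from by omega]
  ring

lemma sum_sig (m i c : ℕ) (hm : m % 2 = 1) :
    ∑ j ∈ Finset.range m, (if 2*(sig m j)+1 = i then c else 0)
      = if (i % 2 = 1 ∧ i < 2*m) then c else 0 := by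
  by_cases hi : i % 2 = 1 ∧ i < 2*m
  · rw [if_pos hi]
    refine sum_if_unique m c i _ ⟨if m/2 ≤ i/2 then i/2 - m/2 else i/2 + m/2 + 1, ?_, ?_, ?_⟩
    · rw [Finset.mem_range]; split <;> omega
    · unfold sig; split_ifs <;> omega
    · intro b hb hgb
      rw [Finset.mem_range] at hb
      unfold sig at hgb
      split_ifs at hgb ⊢ <;> omega
  · rw [if_neg hi]
    refine sum_hit_zero m c i _ fun b hb => ?_
    rw [Finset.mem_range] at hb
    unfold sig
    split_ifs <;> omega

lemma sum_tau (m i c : ℕ) (hm : m % 2 = 1) :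
    ∑ j ∈ Finset.range m, (if 2*(tau m j)+1 = i then c else 0)
      = if (i % 2 = 1 ∧ i < 2*m) then c else 0 := by
  by_cases hi : i % 2 = 1 ∧ i < 2*m
  · rw [if_pos hi]
    refine sum_if_unique m c i _
      ⟨if (i/2) % 2 = 0 then m/2 - i/2/2 else m - i/2/2 - 1, ?_, ?_, ?_⟩
    · rw [Finset.mem_range]; split <;> omega
    · unfold tau; split_ifs <;> omega
    · intro b hb hgb
      rw [Finset.mem_range] at hb
      unfold tau at hgb
      split_ifs at hgb ⊢ <;> omega
  · rw [if_neg hi]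
    refine sum_hit_zero m c i _ fun b hb => ?_
    rw [Finset.mem_range] at hb
    unfold tau
    split_ifs <;> omega

lemma odd_count_sum (m K i : ℕ) (hm : m % 2 = 1) (hm1 : 1 ≤ m) (hK : 3 ≤ K) :
    ∑ jl ∈ Finset.range m ×ˢ Finset.range m,
      (Finset.univ.filter (fun k => Po m K jl k = i)).card
      = if (i % 2 = 1 ∧ i < 2*m) then m * K else 0 := by
  have hQ : ∑ l ∈ Finset.range m,
      ((if 2*l+1 = i then (K-3)/2 else 0) + (if 2*m-1-2*l = i then K-3-(K-3)/2 else 0))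
      = if (i % 2 = 1 ∧ i < 2*m) then K-3 else 0 := by
    rw [Finset.sum_add_distrib, sum_ind1, sum_ind2 m i _ hm1]
    split <;> omega
  have hT : ∑ j ∈ Finset.range m,
      ((if 2*j+1 = i then 1 else 0) + (if 2*(sig m j)+1 = i then 1 else 0)
        + (if 2*(tau m j)+1 = i then 1 else 0))
      = if (i % 2 = 1 ∧ i < 2*m) then 3 else 0 := by
    rw [Finset.sum_add_distrib, Finset.sum_add_distrib, sum_ind1, sum_sig m i _ hm,
      sum_tau m i _ hm]
    split <;> omega
  have hPC : ∀ j l : ℕ,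
      (Finset.univ.filter (fun k => Po m K (j, l) k = i)).card
        = ((if 2*j+1 = i then 1 else 0) + (if 2*(sig m j)+1 = i then 1 else 0)
          + (if 2*(tau m j)+1 = i then 1 else 0))
          + ((if 2*l+1 = i then (K-3)/2 else 0)
            + (if 2*m-1-2*l = i then K-3-(K-3)/2 else 0)) :=
    fun j l => Po_count m K (j, l) i hK
  rw [Finset.sum_product]
  rw [Finset.sum_congr rfl (fun j _ => Finset.sum_congr rfl (fun l _ => hPC j l))]
  rw [Finset.sum_congr rfl (fun j _ => by
    rw [Finset.sum_add_distrib, Finset.sum_const, Finset.card_range, smul_eq_mul, hQ])]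
  rw [Finset.sum_add_distrib, ← Finset.mul_sum, hT, Finset.sum_const, Finset.card_range,
    smul_eq_mul]
  split
  · rw [← Nat.mul_add, show 3 + (K-3) = K from by omega]
  · simp

lemma feasible_odd (m K : ℕ) (hm : m % 2 = 1) (hK : 3 ≤ K) (hK2 : K % 2 = 1) :
    Feasible (m*K) K (uo m) := by
  have hm1 : 1 ≤ m := by omega
  refine feasible_family (Finset.range m ×ˢ Finset.range m)
    ⟨(0,0), Finset.mem_product.mpr ⟨Finset.mem_range.mpr hm1, Finset.mem_range.mpr hm1⟩⟩
    (uo m) (Po m K) (fun jl hjl => ?_) (fun i => ?_)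
  · have h1 := (Finset.mem_product.mp hjl).1
    have h2 := (Finset.mem_product.mp hjl).2
    exact Po_sum m K jl hm hK hK2 (Finset.mem_range.mp h1) (Finset.mem_range.mp h2)
  · rw [← Nat.cast_sum, odd_count_sum m K i hm hm1 hK, Finset.card_product]
    simp only [Finset.card_range]
    by_cases hi : i % 2 = 1 ∧ i < 2*m
    · rw [if_pos hi, uo_pos_eq m i hi]
      have hm' : (m:ℝ) ≠ 0 := Nat.cast_ne_zero.mpr (by omega)
      push_cast
      field_simp
    · rw [if_neg hi, uo_zero_eq m i hi]
      simp


/-- For m ≥ 1, K ≥ 2 and C = mK, the distribution u^o_m is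
(C,K)-feasible iff C ≡ K (mod 2). -/
theorem stmt15 (m K : ℕ) (hm : 1 ≤ m) (hK : 2 ≤ K) :
    Feasible (m*K) K (uo m) ↔ (m*K) % 2 = K % 2 := by
  constructor
  · exact necessity m K
  · intro hpar
    rcases Nat.even_or_odd K with hKe | hKo
    · exact feasible_even m K hm (Nat.even_iff.mp hKe)
    · have hK2 : K % 2 = 1 := Nat.odd_iff.mp hKo
      have hm2 : m % 2 = 1 := by
        rcases Nat.even_or_odd m with hme | hmo
        · have : (m*K) % 2 = 0 := Nat.even_iff.mp (hme.mul_right K)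
          omega
        · exact Nat.odd_iff.mp hmo
      exact feasible_odd m K hm2 (by omega) hK2
end

section
/- Let m ≥ 1 and K ≥ 2 be natural numbers and let C = mK. Then the distribution u^e_m is (C,K)-feasible if and only if C is even. -/
open scoped BigOperators

lemma sum_ite_lt {R : Type} [Semiring R] (a : ℕ) (u v : R) :
    ∑ k ∈ Finset.range (a+a), (if k < a then u else v) = a*u + a*v := by
  rw [Finset.range_eq_Ico, ← Finset.sum_Ico_consecutive _ (Nat.zero_le a) (Nat.le_add_right a a)]
  have h1 : ∑ k ∈ Finset.Ico 0 a, (if k < a then u else v) = a*u := by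
    rw [Finset.sum_congr rfl (fun k hk => if_pos (Finset.mem_Ico.mp hk).2)]
    simp [mul_comm, Nat.smul_one_eq_cast]
  have h2 : ∑ k ∈ Finset.Ico a (a+a), (if k < a then u else v) = a*v := by
    rw [Finset.sum_congr rfl (fun k hk => if_neg (not_lt.mpr (Finset.mem_Ico.mp hk).1))]
    simp [mul_comm]
  rw [h1, h2]

lemma peel3 {R : Type} [AddCommMonoid R] (a : ℕ) (g : ℕ → R) :
    ∑ k ∈ Finset.range (a+a+3), g k
      = (∑ k ∈ Finset.range (a+a), g k) + g (a+a) + g (a+a+1) + g (a+a+2) := by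
  rw [show a+a+3 = (a+a+2)+1 from rfl, Finset.sum_range_succ,
    show a+a+2 = (a+a+1)+1 from rfl, Finset.sum_range_succ,
    show a+a+1 = (a+a)+1 from rfl, Finset.sum_range_succ]

def pj (n j : ℕ) : ℕ := if j ≤ n then n + j else j - (n+1)
def rj (n j : ℕ) : ℕ := if j ≤ n then 2*n - 2*j else 4*n + 1 - 2*j

lemma pjrj_sum (n j : ℕ) (hj : j ≤ 2*n) : j + pj n j + rj n j = 3*n := by
  simp only [pj, rj]; split_ifs <;> omega

lemma pj_le (n j : ℕ) (hj : j ≤ 2*n) : pj n j ≤ 2*n := by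
  simp only [pj]; split_ifs <;> omega

lemma rj_le (n j : ℕ) (hj : j ≤ 2*n) : rj n j ≤ 2*n := by
  simp only [rj]; split_ifs <;> omega

lemma chain_tail0 {R : Type} (a : ℕ) (A B C D E : R) :
    (if a+a < a then A else if a+a < a+a then B
     else if a+a = a+a then C else if a+a = a+a+1 then D else E) = C := by
  rw [if_neg (by omega), if_neg (by omega), if_pos rfl]

lemma chain_tail1 {R : Type} (a : ℕ) (A B C D E : R) :
    (if a+a+1 < a then A else if a+a+1 < a+a then B
     else if a+a+1 = a+a then C else if a+a+1 = a+a+1 then D else E) = D := by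
  rw [if_neg (by omega), if_neg (by omega), if_neg (by omega), if_pos rfl]

lemma chain_tail2 {R : Type} (a : ℕ) (A B C D E : R) :
    (if a+a+2 < a then A else if a+a+2 < a+a then B
     else if a+a+2 = a+a then C else if a+a+2 = a+a+1 then D else E) = E := by
  rw [if_neg (by omega), if_neg (by omega), if_neg (by omega), if_neg (by omega)]

lemma chain_head {R : Type} (a k : ℕ) (hk : k < a+a) (A B C D E : R) :
    (if k < a then A else if k < a+a then B
     else if k = a+a then C else if k = a+a+1 then D else E)
    = (if k < a then A else B) := by
  by_cases h : k < a
  · rw [if_pos h, if_pos h]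
  · rw [if_neg h, if_neg h, if_pos hk]


lemma feasible_helper {K C : ℕ} {p : ℕ → ℝ} {J : Type} [Fintype J]
    (w : J → ℝ) (x : J → Fin K → ℕ)
    (hw0 : ∀ j, 0 ≤ w j) (hw1 : ∑ j, w j = 1)
    (hx : ∀ j, ∑ k, x j k = C)
    (hcount : ∀ i, ∑ j, w j * ((Finset.univ.filter (fun k => x j k = i)).card : ℝ) = K * p i) :
    Feasible C K p := by
  classical
  refine ⟨fun y => ∑ j, if y = x j then w j else 0, ?_, ?_, ?_, ?_⟩
  · intro y
    exact Finset.sum_nonneg (fun j _ => by split <;> [exact hw0 j; exact le_rfl])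
  · intro y hy
    refine Finset.sum_eq_zero (fun j _ => ?_)
    rw [if_neg]
    rintro rfl
    exact hy (hx j)
  · have hsum1 : ∀ j : J, Summable (fun y : Fin K → ℕ => if y = x j then w j else 0) := by
      intro j
      apply summable_of_ne_finset_zero (s := {x j})
      intro y hy
      rw [if_neg (by simpa using hy)]
    rw [Summable.tsum_finsetSum (fun j _ => hsum1 j)]
    rw [← hw1]
    refine Finset.sum_congr rfl (fun j _ => ?_)
    rw [tsum_eq_single (x j) (fun y hy => if_neg hy), if_pos rfl]
  · intro i
    have key : ∀ y : Fin K → ℕ,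
        (∑ j, if y = x j then w j else 0) * ((Finset.univ.filter (fun k => y k = i)).card : ℝ)
        = ∑ j, (if y = x j then w j * ((Finset.univ.filter (fun k => x j k = i)).card : ℝ) else 0) := by
      intro y
      rw [Finset.sum_mul]
      refine Finset.sum_congr rfl (fun j _ => ?_)
      split_ifs with h
      · subst h; rfl
      · exact zero_mul _
    rw [tsum_congr key]
    have hs : ∀ j : J, Summable (fun y : Fin K → ℕ =>
        if y = x j then w j * ((Finset.univ.filter (fun k => x j k = i)).card : ℝ) else 0) := by
      intro j
      apply summable_of_ne_finset_zero (s := {x j})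
      intro y hy
      rw [if_neg (by simpa using hy)]
    rw [Summable.tsum_finsetSum (fun j _ => hs j), ← hcount i]
    refine Finset.sum_congr rfl (fun j _ => ?_)
    rw [tsum_eq_single (x j) (fun y hy => if_neg hy), if_pos rfl]

lemma even_sum_aux (a m tv : ℕ) (h : tv ≤ m) :
    a*(2*tv) + a*(2*(m-tv)) = m*(a+a) := by
  obtain ⟨u, rfl⟩ : ∃ u, m = tv + u := ⟨m - tv, by omega⟩
  rw [Nat.add_sub_cancel_left]
  ring

lemma feasible_even_s16 (m a : ℕ) (ha : 1 ≤ a) :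
    Feasible (m*(a+a)) (a+a) (ue m) := by
  have hNpos : (0:ℝ) < (m:ℝ)+1 := by positivity
  apply feasible_helper (J := Fin (m+1)) (w := fun _ => 1/((m:ℝ)+1))
    (x := fun t k => if (k:ℕ) < a then 2*(t:ℕ) else 2*(m-(t:ℕ)))
  · intro j; positivity
  · rw [Finset.sum_const, Finset.card_univ, Fintype.card_fin, nsmul_eq_mul]
    push_cast
    field_simp
  · intro t
    rw [Fin.sum_univ_eq_sum_range (fun k => if k < a then 2*(t:ℕ) else 2*(m-(t:ℕ))) (a+a),
      sum_ite_lt]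
    simp only [Nat.cast_id]
    have ht : (t:ℕ) < m + 1 := t.isLt
    exact even_sum_aux a m t (by omega)
  · intro i
    have hcard : ∀ t : Fin (m+1),
        (((Finset.univ.filter (fun k : Fin (a+a) =>
            (if (k:ℕ) < a then 2*(t:ℕ) else 2*(m-(t:ℕ))) = i)).card : ℕ) : ℝ)
        = (a:ℝ) * (if 2*(t:ℕ) = i then (1:ℝ) else 0)
          + (a:ℝ) * (if 2*(m-(t:ℕ)) = i then (1:ℝ) else 0) := by
      intro t
      rw [← Finset.sum_boole,
        Fin.sum_univ_eq_sum_range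
          (fun k => if (if k < a then 2*(t:ℕ) else 2*(m-(t:ℕ))) = i then (1:ℝ) else 0) (a+a),
        ← sum_ite_lt a (if 2*(t:ℕ) = i then (1:ℝ) else 0) (if 2*(m-(t:ℕ)) = i then (1:ℝ) else 0)]
      refine Finset.sum_congr rfl (fun k _ => ?_)
      by_cases h : k < a <;> simp [h]
    simp only [hcard]
    by_cases hi : Even i ∧ i ≤ 2*m
    · obtain ⟨⟨r, hr⟩, him⟩ := hi
      have hrm : r ≤ m := by omega
      have e1 : ∑ t : Fin (m+1), (if 2*(t:ℕ) = i then (1:ℝ) else 0) = 1 := by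
        rw [Finset.sum_eq_single (⟨r, by omega⟩ : Fin (m+1))]
        · have hv : ((⟨r, by omega⟩ : Fin (m+1)) : ℕ) = r := rfl
          rw [hv, if_pos (by omega : 2*r = i)]
        · intro b _ hb
          refine if_neg (fun h => hb (Fin.ext ?_))
          show (b:ℕ) = r
          omega
        · exact fun h => absurd (Finset.mem_univ _) h
      have e2 : ∑ t : Fin (m+1), (if 2*(m-(t:ℕ)) = i then (1:ℝ) else 0) = 1 := by
        rw [Finset.sum_eq_single (⟨m - r, by omega⟩ : Fin (m+1))]
        · have hv : ((⟨m - r, by omega⟩ : Fin (m+1)) : ℕ) = m - r := rfl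
          rw [hv, if_pos (by omega : 2*(m-(m-r)) = i)]
        · intro b _ hb
          have hbm : (b:ℕ) < m + 1 := b.isLt
          refine if_neg (fun h => hb (Fin.ext ?_))
          show (b:ℕ) = m - r
          omega
        · exact fun h => absurd (Finset.mem_univ _) h
      rw [← Finset.mul_sum, Finset.sum_add_distrib, ← Finset.mul_sum, ← Finset.mul_sum, e1, e2]
      have hue : ue m i = 1/((m:ℝ)+1) := by
        rw [ue, if_pos (show Even i ∧ i ≤ 2*m from ⟨⟨r, hr⟩, him⟩)]
      rw [hue]
      push_cast
      ring
    · have z1 : ∀ t : Fin (m+1), (if 2*(t:ℕ) = i then (1:ℝ) else 0) = 0 := by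
        intro t
        have htm : (t:ℕ) < m + 1 := t.isLt
        exact if_neg (fun h => hi ⟨⟨(t:ℕ), by omega⟩, by omega⟩)
      have z2 : ∀ t : Fin (m+1), (if 2*(m-(t:ℕ)) = i then (1:ℝ) else 0) = 0 := by
        intro t
        exact if_neg (fun h => hi ⟨⟨m-(t:ℕ), by omega⟩, by omega⟩)
      have hue : ue m i = 0 := by rw [ue, if_neg hi]
      simp [z1, z2, hue]

lemma feasible_odd_s16 (n a : ℕ) (hn : 1 ≤ n) :
    Feasible ((2*n)*(a+a+3)) (a+a+3) (ue (2*n)) := by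
  have hNpos : (0:ℝ) < 2*(n:ℝ)+1 := by positivity
  apply feasible_helper (J := Fin (2*n+1) × Fin (2*n+1))
    (w := fun _ => (1/(2*(n:ℝ)+1))^2)
    (x := fun tj k =>
      if (k:ℕ) < a then 2*(tj.1:ℕ)
      else if (k:ℕ) < a+a then 2*(2*n-(tj.1:ℕ))
      else if (k:ℕ) = a+a then 2*(tj.2:ℕ)
      else if (k:ℕ) = a+a+1 then 2*(pj n (tj.2:ℕ))
      else 2*(rj n (tj.2:ℕ)))
  · intro j; positivity
  · rw [Finset.sum_const, Finset.card_univ, Fintype.card_prod, Fintype.card_fin, nsmul_eq_mul]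
    push_cast
    field_simp
  · rintro ⟨t, j⟩
    set tv := (t:ℕ) with htv
    set jv := (j:ℕ) with hjv
    rw [Fin.sum_univ_eq_sum_range (fun k =>
      if k < a then 2*tv
      else if k < a+a then 2*(2*n-tv)
      else if k = a+a then 2*jv
      else if k = a+a+1 then 2*(pj n jv)
      else 2*(rj n jv)) (a+a+3), peel3]
    rw [chain_tail0, chain_tail1, chain_tail2,
      Finset.sum_congr rfl (fun k hk => chain_head a k (Finset.mem_range.mp hk) _ _ _ _ _),
      sum_ite_lt]
    simp only [Nat.cast_id]
    have ht2 : tv ≤ 2*n := by have := t.isLt; omega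
    have hj2 : jv ≤ 2*n := by have := j.isLt; omega
    have hsum3 : jv + pj n jv + rj n jv = 3*n := pjrj_sum n jv hj2
    obtain ⟨u, hu⟩ : ∃ u, 2*n - tv = u := ⟨_, rfl⟩
    have htu : tv + u = 2*n := by omega
    rw [hu]
    set p' := pj n jv
    set r' := rj n jv
    calc a*(2*tv) + a*(2*u) + 2*jv + 2*p' + 2*r'
        = 2*a*(tv+u) + 2*(jv+p'+r') := by ring
      _ = 2*a*(2*n) + 2*(3*n) := by rw [htu, hsum3]
      _ = 2*n*(a+a+3) := by ring
  · intro i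
    have hcard : ∀ (t j : Fin (2*n+1)),
        (((Finset.univ.filter (fun k : Fin (a+a+3) =>
            (if (k:ℕ) < a then 2*(t:ℕ)
             else if (k:ℕ) < a+a then 2*(2*n-(t:ℕ))
             else if (k:ℕ) = a+a then 2*(j:ℕ)
             else if (k:ℕ) = a+a+1 then 2*(pj n (j:ℕ))
             else 2*(rj n (j:ℕ))) = i)).card : ℕ) : ℝ)
        = (a:ℝ) * (if 2*(t:ℕ) = i then (1:ℝ) else 0)
          + (a:ℝ) * (if 2*(2*n-(t:ℕ)) = i then (1:ℝ) else 0)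
          + ((if 2*(j:ℕ) = i then (1:ℝ) else 0)
             + (if 2*(pj n (j:ℕ)) = i then (1:ℝ) else 0)
             + (if 2*(rj n (j:ℕ)) = i then (1:ℝ) else 0)) := by
      intro t j
      rw [← Finset.sum_boole, Fin.sum_univ_eq_sum_range (fun k =>
        if (if k < a then 2*(t:ℕ)
            else if k < a+a then 2*(2*n-(t:ℕ))
            else if k = a+a then 2*(j:ℕ)
            else if k = a+a+1 then 2*(pj n (j:ℕ))
            else 2*(rj n (j:ℕ))) = i then (1:ℝ) else 0) (a+a+3), peel3,
        chain_tail0, chain_tail1, chain_tail2]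
      have e0 : ∑ k ∈ Finset.range (a+a),
          (if (if k < a then 2*(t:ℕ)
               else if k < a+a then 2*(2*n-(t:ℕ))
               else if k = a+a then 2*(j:ℕ)
               else if k = a+a+1 then 2*(pj n (j:ℕ))
               else 2*(rj n (j:ℕ))) = i then (1:ℝ) else 0)
          = ∑ k ∈ Finset.range (a+a),
            (if k < a then (if 2*(t:ℕ) = i then (1:ℝ) else 0)
             else (if 2*(2*n-(t:ℕ)) = i then (1:ℝ) else 0)) := by
        refine Finset.sum_congr rfl (fun k hk => ?_)
        rw [chain_head a k (Finset.mem_range.mp hk)]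
        by_cases h : k < a
        · rw [if_pos h, if_pos h]
        · rw [if_neg h, if_neg h]
      rw [e0, sum_ite_lt]
      ring
    by_cases hi : Even i ∧ i ≤ 2*(2*n)
    · obtain ⟨⟨r, hr⟩, him⟩ := hi
      have hrm : r ≤ 2*n := by omega
      have E1 : ∑ t : Fin (2*n+1), (if 2*(t:ℕ) = i then (1:ℝ) else 0) = 1 := by
        rw [Finset.sum_eq_single (⟨r, by omega⟩ : Fin (2*n+1))]
        · have hv : ((⟨r, by omega⟩ : Fin (2*n+1)) : ℕ) = r := rfl
          rw [hv, if_pos (by omega : 2*r = i)]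
        · intro b _ hb
          refine if_neg (fun h => hb (Fin.ext ?_))
          show (b:ℕ) = r
          omega
        · exact fun h => absurd (Finset.mem_univ _) h
      have E2 : ∑ t : Fin (2*n+1), (if 2*(2*n-(t:ℕ)) = i then (1:ℝ) else 0) = 1 := by
        rw [Finset.sum_eq_single (⟨2*n - r, by omega⟩ : Fin (2*n+1))]
        · have hv : ((⟨2*n - r, by omega⟩ : Fin (2*n+1)) : ℕ) = 2*n - r := rfl
          rw [hv, if_pos (by omega : 2*(2*n-(2*n-r)) = i)]
        · intro b _ hb
          have hbm : (b:ℕ) < 2*n + 1 := b.isLt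
          refine if_neg (fun h => hb (Fin.ext ?_))
          show (b:ℕ) = 2*n - r
          omega
        · exact fun h => absurd (Finset.mem_univ _) h
      have E4 : ∑ j : Fin (2*n+1), (if 2*(pj n (j:ℕ)) = i then (1:ℝ) else 0) = 1 := by
        by_cases hns : n ≤ r
        · rw [Finset.sum_eq_single (⟨r - n, by omega⟩ : Fin (2*n+1))]
          · have hv : ((⟨r - n, by omega⟩ : Fin (2*n+1)) : ℕ) = r - n := rfl
            rw [hv, if_pos]
            show 2 * pj n (r - n) = i
            simp only [pj]; split_ifs <;> omega
          · intro b _ hb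
            have hbm : (b:ℕ) < 2*n + 1 := b.isLt
            refine if_neg (fun h => hb (Fin.ext ?_))
            show (b:ℕ) = r - n
            simp only [pj] at h; split_ifs at h <;> omega
          · exact fun h => absurd (Finset.mem_univ _) h
        · rw [Finset.sum_eq_single (⟨r + n + 1, by omega⟩ : Fin (2*n+1))]
          · have hv : ((⟨r + n + 1, by omega⟩ : Fin (2*n+1)) : ℕ) = r + n + 1 := rfl
            rw [hv, if_pos]
            show 2 * pj n (r + n + 1) = i
            simp only [pj]; split_ifs <;> omega
          · intro b _ hb
            have hbm : (b:ℕ) < 2*n + 1 := b.isLt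
            refine if_neg (fun h => hb (Fin.ext ?_))
            show (b:ℕ) = r + n + 1
            simp only [pj] at h; split_ifs at h <;> omega
          · exact fun h => absurd (Finset.mem_univ _) h
      have E5 : ∑ j : Fin (2*n+1), (if 2*(rj n (j:ℕ)) = i then (1:ℝ) else 0) = 1 := by
        rcases Nat.even_or_odd r with ⟨e, he⟩ | ⟨e, he⟩
        · rw [Finset.sum_eq_single (⟨n - e, by omega⟩ : Fin (2*n+1))]
          · have hv : ((⟨n - e, by omega⟩ : Fin (2*n+1)) : ℕ) = n - e := rfl
            rw [hv, if_pos]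
            show 2 * rj n (n - e) = i
            simp only [rj]; split_ifs <;> omega
          · intro b _ hb
            have hbm : (b:ℕ) < 2*n + 1 := b.isLt
            refine if_neg (fun h => hb (Fin.ext ?_))
            show (b:ℕ) = n - e
            simp only [rj] at h; split_ifs at h <;> omega
          · exact fun h => absurd (Finset.mem_univ _) h
        · rw [Finset.sum_eq_single (⟨2*n - e, by omega⟩ : Fin (2*n+1))]
          · have hv : ((⟨2*n - e, by omega⟩ : Fin (2*n+1)) : ℕ) = 2*n - e := rfl
            rw [hv, if_pos]
            show 2 * rj n (2*n - e) = i
            simp only [rj]; split_ifs <;> omega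
          · intro b _ hb
            have hbm : (b:ℕ) < 2*n + 1 := b.isLt
            refine if_neg (fun h => hb (Fin.ext ?_))
            show (b:ℕ) = 2*n - e
            simp only [rj] at h; split_ifs at h <;> omega
          · exact fun h => absurd (Finset.mem_univ _) h
      have E3 : ∑ j : Fin (2*n+1), (if 2*(j:ℕ) = i then (1:ℝ) else 0) = 1 := E1
      rw [Fintype.sum_prod_type]
      simp only [hcard]
      have inner : ∀ t : Fin (2*n+1),
          ∑ j : Fin (2*n+1), ((1/(2*(n:ℝ)+1))^2) *
            ((a:ℝ) * (if 2*(t:ℕ) = i then (1:ℝ) else 0)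
             + (a:ℝ) * (if 2*(2*n-(t:ℕ)) = i then (1:ℝ) else 0)
             + ((if 2*(j:ℕ) = i then (1:ℝ) else 0)
                + (if 2*(pj n (j:ℕ)) = i then (1:ℝ) else 0)
                + (if 2*(rj n (j:ℕ)) = i then (1:ℝ) else 0)))
          = (1/(2*(n:ℝ)+1))^2 * ((2*(n:ℝ)+1) *
              ((a:ℝ) * (if 2*(t:ℕ) = i then (1:ℝ) else 0)
               + (a:ℝ) * (if 2*(2*n-(t:ℕ)) = i then (1:ℝ) else 0)) + 3) := by
        intro t
        rw [← Finset.mul_sum]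
        congr 1
        rw [Finset.sum_add_distrib, Finset.sum_const, Finset.card_univ, Fintype.card_fin,
          nsmul_eq_mul, Finset.sum_add_distrib, Finset.sum_add_distrib, E3, E4, E5]
        push_cast
        ring
      rw [Finset.sum_congr rfl (fun t _ => inner t)]
      have expand : ∀ t : Fin (2*n+1),
          (1/(2*(n:ℝ)+1))^2 * ((2*(n:ℝ)+1) *
              ((a:ℝ) * (if 2*(t:ℕ) = i then (1:ℝ) else 0)
               + (a:ℝ) * (if 2*(2*n-(t:ℕ)) = i then (1:ℝ) else 0)) + 3)
          = ((1/(2*(n:ℝ)+1))^2 * (2*(n:ℝ)+1) * a) * (if 2*(t:ℕ) = i then (1:ℝ) else 0)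
            + ((1/(2*(n:ℝ)+1))^2 * (2*(n:ℝ)+1) * a) * (if 2*(2*n-(t:ℕ)) = i then (1:ℝ) else 0)
            + 3 * (1/(2*(n:ℝ)+1))^2 := fun t => by ring
      rw [Finset.sum_congr rfl (fun t _ => expand t), Finset.sum_add_distrib,
        Finset.sum_add_distrib, ← Finset.mul_sum, ← Finset.mul_sum, E1, E2,
        Finset.sum_const, Finset.card_univ, Fintype.card_fin, nsmul_eq_mul]
      have hue : ue (2*n) i = 1/(2*(n:ℝ)+1) := by
        rw [ue, if_pos (show Even i ∧ i ≤ 2*(2*n) from ⟨⟨r, hr⟩, him⟩)]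
        push_cast
        ring
      rw [hue]
      have hne : (2*(n:ℝ)+1) ≠ 0 := by positivity
      push_cast
      field_simp
    · have z1 : ∀ t : Fin (2*n+1), (if 2*(t:ℕ) = i then (1:ℝ) else 0) = 0 := by
        intro t
        have htm : (t:ℕ) < 2*n + 1 := t.isLt
        exact if_neg (fun h => hi ⟨⟨(t:ℕ), by omega⟩, by omega⟩)
      have z2 : ∀ t : Fin (2*n+1), (if 2*(2*n-(t:ℕ)) = i then (1:ℝ) else 0) = 0 := by
        intro t
        exact if_neg (fun h => hi ⟨⟨2*n-(t:ℕ), by omega⟩, by omega⟩)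
      have z4 : ∀ j : Fin (2*n+1), (if 2*(pj n (j:ℕ)) = i then (1:ℝ) else 0) = 0 := by
        intro j
        have hle : pj n (j:ℕ) ≤ 2*n := pj_le n _ (by have := j.isLt; omega)
        exact if_neg (fun h => hi ⟨⟨pj n (j:ℕ), by omega⟩, by omega⟩)
      have z5 : ∀ j : Fin (2*n+1), (if 2*(rj n (j:ℕ)) = i then (1:ℝ) else 0) = 0 := by
        intro j
        have hle : rj n (j:ℕ) ≤ 2*n := rj_le n _ (by have := j.isLt; omega)
        exact if_neg (fun h => hi ⟨⟨rj n (j:ℕ), by omega⟩, by omega⟩)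
      have hue : ue (2*n) i = 0 := by rw [ue, if_neg hi]
      simp [hcard, z1, z2, z4, z5, hue]

lemma forward_dir (m K : ℕ) (h : Feasible (m*K) K (ue m)) : Even (m*K) := by
  by_contra hodd
  obtain ⟨ξ, h0, hC, h1, hcnt⟩ := h
  have hzero : ∀ x : Fin K → ℕ, ξ x = 0 := by
    intro x
    by_cases hs : (∑ k, x k) = m*K
    · have hex : ∃ k : Fin K, Odd (x k) := by
        by_contra hall
        push_neg at hall
        simp only [Nat.not_odd_iff_even] at hall
        have : Even (∑ k, x k) := Finset.even_sum _ (fun k _ => hall k)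
        rw [hs] at this
        exact hodd this
      obtain ⟨k₀, hk₀⟩ := hex
      have hue0 : ue m (x k₀) = 0 := by
        rw [ue, if_neg (fun hc => (Nat.not_odd_iff_even.mpr hc.1) hk₀)]
      classical
      set S : Finset (Fin K → ℕ) := Fintype.piFinset (fun _ => Finset.range (m*K+1)) with hS
      have hvanish : ∀ y : Fin K → ℕ, y ∉ S →
          ξ y * ((Finset.univ.filter (fun k => y k = x k₀)).card : ℝ) = 0 := by
        intro y hy
        have hns : ¬ (∑ k, y k) = m*K := by
          intro hsum
          apply hy
          rw [hS, Fintype.mem_piFinset]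
          intro k
          rw [Finset.mem_range]
          have := Finset.single_le_sum (f := y) (fun k _ => Nat.zero_le _) (Finset.mem_univ k)
          omega
        rw [hC y hns, zero_mul]
      have hsum0 : ∑ y ∈ S, ξ y * ((Finset.univ.filter (fun k => y k = x k₀)).card : ℝ) = 0 := by
        rw [← tsum_eq_sum (L := SummationFilter.unconditional _) hvanish, hcnt (x k₀), hue0, mul_zero]
      have hx_mem : x ∈ S := by
        rw [hS, Fintype.mem_piFinset]
        intro k
        rw [Finset.mem_range]
        have := Finset.single_le_sum (f := x) (fun k _ => Nat.zero_le _) (Finset.mem_univ k)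
        omega
      have hterm : ξ x * ((Finset.univ.filter (fun k => x k = x k₀)).card : ℝ) = 0 := by
        have hnn : ∀ y ∈ S, 0 ≤ ξ y * ((Finset.univ.filter (fun k => y k = x k₀)).card : ℝ) :=
          fun y _ => mul_nonneg (h0 y) (Nat.cast_nonneg _)
        exact (Finset.sum_eq_zero_iff_of_nonneg hnn).mp hsum0 x hx_mem
      have hcpos : (0:ℝ) < ((Finset.univ.filter (fun k => x k = x k₀)).card : ℝ) := by
        have hk : k₀ ∈ Finset.univ.filter (fun k => x k = x k₀) :=
          Finset.mem_filter.mpr ⟨Finset.mem_univ _, rfl⟩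
        have := Finset.card_pos.mpr ⟨k₀, hk⟩
        exact_mod_cast this
      rcases mul_eq_zero.mp hterm with h' | h'
      · exact h'
      · exact absurd h' (ne_of_gt hcpos)
    · exact hC x hs
  have : (1:ℝ) = 0 := by
    rw [← h1]
    simp [hzero]
  norm_num at this

/-- For m ≥ 1, K ≥ 2 and C = mK, the distribution u^e_m is
(C,K)-feasible iff C is even. -/
theorem stmt16 (m K : ℕ) (hm : 1 ≤ m) (hK : 2 ≤ K) :
    Feasible (m*K) K (ue m) ↔ Even (m*K) := by
  constructor
  · exact forward_dir m K
  · intro hev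
    rcases Nat.even_or_odd K with ⟨a, ha⟩ | ⟨b, hb⟩
    · have ha1 : 1 ≤ a := by omega
      have hfe := feasible_even_s16 m a ha1
      rwa [← ha] at hfe
    · have hoddK : Odd K := ⟨b, hb⟩
      have hme : Even m := by
        rcases Nat.even_mul.mp hev with h | h
        · exact h
        · exact absurd h (Nat.not_even_iff_odd.mpr hoddK)
      obtain ⟨n, hn⟩ := hme
      have hn1 : 1 ≤ n := by omega
      have hb1 : 1 ≤ b := by omega
      have hfo := feasible_odd_s16 n (b-1) hn1
      have hK' : (b-1)+(b-1)+3 = K := by omega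
      have hm' : 2*n = m := by omega
      rw [hK', hm'] at hfo
      exact hfo
end

section
/- Let m ≥ 1 be an integer and let q be a probability distribution on ℕ. Then H(u^o_m, q) = 1 − (1/m)·Σ_{i=1}^{2m} Q(i) and H(u^e_m, q) = 1 − (1/(m+1))·(1 + Σ_{i=1}^{2m+1} Q(i)), where Q(i) := Σ_{j≥i} q(j). -/
open scoped BigOperators

lemma hpay_core (p q : ℕ → ℝ) (hp0 : ∀ i, 0 ≤ p i) (s : Finset ℕ)
    (hps : ∀ i ∉ s, p i = 0) (hq0 : ∀ i, 0 ≤ q i) (hqs : Summable q)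
    (hq1 : (∑' i, q i) = 1) :
    Hpay p q = ∑ i ∈ s, p i *
      (1 - (∑' j : ℕ, if i ≤ j then q j else 0)
         - (∑' j : ℕ, if i + 1 ≤ j then q j else 0)) := by
  have hps' : Summable p := summable_of_ne_finset_zero hps
  have hg : Summable (fun ij : ℕ × ℕ => p ij.1 * q ij.2) :=
    hps'.mul_of_nonneg hqs hp0 hq0
  -- tail sums are summable
  have htail : ∀ i : ℕ, Summable (fun j => if i ≤ j then q j else 0) := by
    intro i
    exact hqs.of_nonneg_of_le (fun j => by split_ifs <;> simp [hq0 j])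
      (fun j => by split_ifs <;> simp [hq0 j])
  -- Q i = 1 - partial sum
  have hQ : ∀ i : ℕ, (∑' j : ℕ, if i ≤ j then q j else 0)
      = 1 - ∑ j ∈ Finset.range i, q j := by
    intro i
    have h1 : ∀ j, (if i ≤ j then q j else 0) = q j - (if j < i then q j else 0) := by
      intro j; rcases le_or_gt i j with h | h
      · simp [h, Nat.not_lt.mpr h]
      · simp [Nat.not_le.mpr h, h]
    have h2 : Summable (fun j : ℕ => if j < i then q j else 0) :=
      summable_of_ne_finset_zero (s := Finset.range i)
        (fun j hj => by simp at hj; simp [Nat.not_lt.mpr hj])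
    have h3 : (∑' j : ℕ, if j < i then q j else 0) = ∑ j ∈ Finset.range i, q j := by
      rw [tsum_eq_sum (s := Finset.range i)
        (fun j hj => by simp at hj; simp [Nat.not_lt.mpr hj])]
      exact Finset.sum_congr rfl (fun j hj => by simp at hj; simp [hj])
    calc (∑' j : ℕ, if i ≤ j then q j else 0)
        = ∑' j : ℕ, (q j - if j < i then q j else 0) := by
          exact tsum_congr h1
      _ = (∑' j, q j) - (∑' j : ℕ, if j < i then q j else 0) := Summable.tsum_sub hqs h2
      _ = 1 - ∑ j ∈ Finset.range i, q j := by rw [hq1, h3]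
  -- first double sum
  have e1 : (∑' ij : ℕ × ℕ, if ij.2 < ij.1 then p ij.1 * q ij.2 else 0)
      = ∑ i ∈ s, p i * ∑ j ∈ Finset.range i, q j := by
    have hsum1 : Summable (fun ij : ℕ × ℕ => if ij.2 < ij.1 then p ij.1 * q ij.2 else 0) := by
      apply hg.of_nonneg_of_le
      · intro ij; split_ifs <;> [exact mul_nonneg (hp0 _) (hq0 _); exact le_rfl]
      · intro ij; split_ifs <;> [exact le_rfl; exact mul_nonneg (hp0 _) (hq0 _)]
    rw [Summable.tsum_prod' hsum1 hsum1.prod_factor]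
    have : ∀ i : ℕ, (∑' j : ℕ, if j < i then p i * q j else 0)
        = p i * ∑ j ∈ Finset.range i, q j := by
      intro i
      rw [tsum_eq_sum (s := Finset.range i)
        (fun j hj => by simp at hj; simp [Nat.not_lt.mpr hj]), Finset.mul_sum]
      exact Finset.sum_congr rfl (fun j hj => by simp at hj; simp [hj])
    simp only [this]
    exact tsum_eq_sum (fun i hi => by simp [hps i hi])
  -- second double sum
  have e2 : (∑' ij : ℕ × ℕ, if ij.1 < ij.2 then p ij.1 * q ij.2 else 0)
      = ∑ i ∈ s, p i * (∑' j : ℕ, if i + 1 ≤ j then q j else 0) := by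
    have hsum2 : Summable (fun ij : ℕ × ℕ => if ij.1 < ij.2 then p ij.1 * q ij.2 else 0) := by
      apply hg.of_nonneg_of_le
      · intro ij; split_ifs <;> [exact mul_nonneg (hp0 _) (hq0 _); exact le_rfl]
      · intro ij; split_ifs <;> [exact le_rfl; exact mul_nonneg (hp0 _) (hq0 _)]
    rw [Summable.tsum_prod' hsum2 hsum2.prod_factor]
    have : ∀ i : ℕ, (∑' j : ℕ, if i < j then p i * q j else 0)
        = p i * (∑' j : ℕ, if i + 1 ≤ j then q j else 0) := by
      intro i
      rw [← tsum_mul_left]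
      apply tsum_congr; intro j
      have : i < j ↔ i + 1 ≤ j := Iff.rfl
      split_ifs <;> simp_all
    simp only [this]
    exact tsum_eq_sum (fun i hi => by simp [hps i hi])
  rw [Hpay, e1, e2, ← Finset.sum_sub_distrib]
  apply Finset.sum_congr rfl
  intro i _
  rw [hQ i]
  ring

lemma pairA (f : ℕ → ℝ) (m : ℕ) :
    ∑ i ∈ Finset.Icc 1 (2*m), f i
      = ∑ k ∈ Finset.range m, (f (2*k+1) + f (2*k+2)) := by
  induction m with
  | zero => simp
  | succ n ih =>
    have e1 : ∑ i ∈ Finset.Icc 1 (2*(n+1)), f i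
        = ∑ i ∈ Finset.Icc 1 (2*n), f i + f (2*n+1) + f (2*n+2) := by
      rw [show 2*(n+1) = (2*n+1)+1 by ring,
        Finset.sum_Icc_succ_top (by omega) f,
        Finset.sum_Icc_succ_top (by omega) f,
        show (2*n+1)+1 = 2*n+2 by ring]
    rw [Finset.sum_range_succ, ← ih, e1]
    ring

lemma pairB (f : ℕ → ℝ) (m : ℕ) :
    ∑ k ∈ Finset.range (m+1), (f (2*k) + f (2*k+1))
      = f 0 + ∑ i ∈ Finset.Icc 1 (2*m+1), f i := by
  induction m with
  | zero => simp
  | succ n ih =>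
    have e1 : ∑ i ∈ Finset.Icc 1 (2*(n+1)+1), f i
        = ∑ i ∈ Finset.Icc 1 (2*n+1), f i + f (2*n+2) + f (2*n+3) := by
      rw [show 2*(n+1)+1 = (2*n+2)+1 by ring,
        Finset.sum_Icc_succ_top (by omega) f,
        show (2*n+2 : ℕ) = (2*n+1)+1 by ring,
        Finset.sum_Icc_succ_top (by omega) f,
        show (2*n+1)+1 = 2*n+2 by ring,
        show (2*n+2)+1 = 2*n+3 by ring]
    have e2 : f (2*(n+1)) = f (2*n+2) := by norm_num [show 2*(n+1) = 2*n+2 by ring]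
    have e3 : f (2*(n+1)+1) = f (2*n+3) := by norm_num [show 2*(n+1)+1 = 2*n+3 by ring]
    rw [Finset.sum_range_succ, ih, e1, e2, e3]
    ring

/-- exact formulas for H(u^o_m, q) and H(u^e_m, q) in terms of the
tail sums Q(i) = Σ_{j ≥ i} q j. -/
theorem stmt18 (m : ℕ) (hm : 1 ≤ m) (q : ℕ → ℝ) (hq : IsPMF q) :
    Hpay (uo m) q
      = 1 - (1/(m:ℝ)) * ∑ i ∈ Finset.Icc 1 (2*m),
          (∑' j : ℕ, if i ≤ j then q j else 0) ∧
    Hpay (ue m) q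
      = 1 - (1/((m:ℝ)+1)) * (1 + ∑ i ∈ Finset.Icc 1 (2*m+1),
          (∑' j : ℕ, if i ≤ j then q j else 0)) := by
  obtain ⟨hq0, hq1⟩ := hq
  have hqs : Summable q := by
    by_contra h
    rw [tsum_eq_zero_of_not_summable h] at hq1
    norm_num at hq1
  set Q : ℕ → ℝ := fun i => ∑' j : ℕ, if i ≤ j then q j else 0 with hQdef
  have hQ0 : Q 0 = 1 := by
    simp only [hQdef, Nat.zero_le, if_true]
    exact hq1
  have hmR : (m:ℝ) ≠ 0 := by
    exact Nat.cast_ne_zero.mpr (by omega)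
  constructor
  · -- odd case
    have hp0 : ∀ i, 0 ≤ uo m i := by
      intro i; simp only [uo]; split_ifs
      · positivity
      · exact le_refl 0
    have hps : ∀ i ∉ (Finset.range m).image (fun k => 2*k+1), uo m i = 0 := by
      intro i hi
      simp only [uo]; split_ifs with h
      · exfalso; apply hi
        obtain ⟨⟨k, hk⟩, hlt⟩ := h
        simp only [Finset.mem_image, Finset.mem_range]
        exact ⟨k, by omega, by omega⟩
      · rfl
    rw [hpay_core (uo m) q hp0 _ hps hq0 hqs hq1]
    rw [Finset.sum_image (by intro a _ b _ hab; simp only at hab; omega)]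
    have key : ∀ k ∈ Finset.range m,
        uo m (2*k+1) * (1 - (∑' j : ℕ, if 2*k+1 ≤ j then q j else 0)
          - (∑' j : ℕ, if 2*k+1+1 ≤ j then q j else 0))
        = 1/(m:ℝ) - (1/(m:ℝ)) * (Q (2*k+1) + Q (2*k+2)) := by
      intro k hk
      simp only [Finset.mem_range] at hk
      have huo : uo m (2*k+1) = 1/(m:ℝ) := by
        simp only [uo]
        rw [if_pos ⟨⟨k, by omega⟩, by omega⟩]
      have h22 : (2*k+1+1) = 2*k+2 := rfl
      rw [huo, h22, hQdef]
      ring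
    rw [Finset.sum_congr rfl key, Finset.sum_sub_distrib, Finset.sum_const,
      ← Finset.mul_sum, ← pairA Q m, Finset.card_range, nsmul_eq_mul,
      mul_one_div, div_self hmR]
  · -- even case
    have hp0 : ∀ i, 0 ≤ ue m i := by
      intro i; simp only [ue]; split_ifs
      · positivity
      · exact le_refl 0
    have hps : ∀ i ∉ (Finset.range (m+1)).image (fun k => 2*k), ue m i = 0 := by
      intro i hi
      simp only [ue]; split_ifs with h
      · exfalso; apply hi
        obtain ⟨⟨k, hk⟩, hle⟩ := h
        simp only [Finset.mem_image, Finset.mem_range]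
        exact ⟨k, by omega, by omega⟩
      · rfl
    rw [hpay_core (ue m) q hp0 _ hps hq0 hqs hq1]
    rw [Finset.sum_image (by intro a _ b _ hab; simp only at hab; omega)]
    have key : ∀ k ∈ Finset.range (m+1),
        ue m (2*k) * (1 - (∑' j : ℕ, if 2*k ≤ j then q j else 0)
          - (∑' j : ℕ, if 2*k+1 ≤ j then q j else 0))
        = 1/((m:ℝ)+1) - (1/((m:ℝ)+1)) * (Q (2*k) + Q (2*k+1)) := by
      intro k hk
      simp only [Finset.mem_range] at hk
      have hue : ue m (2*k) = 1/((m:ℝ)+1) := by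
        simp only [ue]
        rw [if_pos ⟨⟨k, by omega⟩, by omega⟩]
      rw [hue, hQdef]
      ring
    have hm1 : ((m:ℝ)+1) ≠ 0 := by positivity
    rw [Finset.sum_congr rfl key, Finset.sum_sub_distrib, Finset.sum_const,
      ← Finset.mul_sum, pairB Q m, hQ0, Finset.card_range, nsmul_eq_mul,
      mul_one_div]
    push_cast
    rw [div_self hm1]
end
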